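/- arXiv:1004.5357 — 4 statements merged into one kernel-verified Lean document; each statement's English description precedes it below -/
import Mathlib

section
/- Let K be a field of characteristic 0 and J a finite set. The kernel of the derivation D on R_J (i.e. the algebra of u_2-semi-invariants) is generated as a K-algebra by the variables α₀ (α ∈ J) together with the brackets [α,β] := α₀β₁ − α₁β₀ (α, β ∈ J); that is, ker D = Algebra.adjoin K ({α₀ : α ∈ J} ∪ {α₀β₁ − α₁β₀ : α, β ∈ J}). -/
open MvPolynomial Finsupp

set_option linter.unusedSectionVars false

namespace FFTAux

variable {K : Type*} [Field K] [CharZero K] {J : Type*} [Fintype J]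

def ww (J : Type*) : J × Fin 2 → ℕ × ℕ := fun v => if v.2 = 0 then (1,0) else (0,1)


lemma single_add_tsub {σ : Type*} (d : σ →₀ ℕ) (i : σ) (h : d i ≠ 0) :
    Finsupp.single i 1 + (d - Finsupp.single i 1) = d := by
  classical
  ext a
  rcases eq_or_ne a i with rfl | ha
  · simp only [Finsupp.add_apply, Finsupp.tsub_apply, Finsupp.single_eq_same]
    omega
  · simp [Finsupp.single_eq_of_ne' (Ne.symm ha)]

lemma weight_tsub {σ M : Type*} [AddCommMonoid M] (w : σ → M) (d : σ →₀ ℕ) (i : σ)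
    (h : d i ≠ 0) : weight w d = w i + weight w (d - Finsupp.single i 1) := by
  conv_lhs => rw [← single_add_tsub d i h]
  rw [map_add]
  congr 1
  simp [Finsupp.weight_apply, Finsupp.sum_single_index]

lemma isWH_pderiv {σ M : Type*} [AddCancelCommMonoid M] {w : σ → M}
    {F : MvPolynomial σ K} {m m' : M} (i : σ)
    (hF : F.IsWeightedHomogeneous w m) (h : m' + w i = m) :
    (pderiv i F).IsWeightedHomogeneous w m' := by
  classical
  have hsum : pderiv i F = ∑ d ∈ F.support, pderiv i (monomial d (coeff d F)) := by
    rw [← map_sum, ← as_sum]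
  rw [hsum, ← mem_weightedHomogeneousSubmodule]
  apply Submodule.sum_mem
  intro d hd
  rw [pderiv_monomial, mem_weightedHomogeneousSubmodule]
  by_cases h0 : d i = 0
  · rw [h0]
    simp only [Nat.cast_zero, mul_zero, map_zero]
    exact isWeightedHomogeneous_zero K w m'
  · apply isWeightedHomogeneous_monomial
    have hw : weight w d = m := hF (MvPolynomial.mem_support_iff.mp hd)
    have := weight_tsub w d i h0
    rw [hw] at this
    have h2 : w i + weight w (d - Finsupp.single i 1) = w i + m' := by
      rw [← this, ← h, add_comm]
    exact (add_left_cancel h2)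




lemma weight_eq_sum (d : (J × Fin 2) →₀ ℕ) :
    weight (ww J) d = (∑ γ : J, d (γ, 0), ∑ γ : J, d (γ, 1)) := by
  classical
  rw [Finsupp.weight_apply, Finsupp.sum_fintype _ _ (fun v => by simp)]
  rw [Fintype.sum_prod_type]
  simp only [Fin.sum_univ_two]
  rw [Prod.ext_iff]
  constructor
  · rw [Prod.fst_sum]
    simp [ww, Prod.smul_def]
  · rw [Prod.snd_sum]
    simp [ww, Prod.smul_def]

lemma euler {j : Fin 2} {c : ℕ} {F : MvPolynomial (J × Fin 2) K}
    (hc : ∀ d ∈ F.support, ∑ γ : J, d (γ, j) = c) :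
    ∑ γ : J, X (γ, j) * pderiv (γ, j) F = c • F := by
  classical
  have key : ∀ d ∈ F.support, ∀ γ : J,
      X (γ, j) * pderiv (γ, j) (monomial d (coeff d F)) =
        monomial d (d (γ, j) • coeff d F) := by
    intro d _ γ
    rw [pderiv_monomial]
    by_cases h0 : d (γ, j) = 0
    · simp [h0]
    · rw [X, monomial_mul, one_mul, single_add_tsub d (γ, j) h0]
      rw [mul_comm, nsmul_eq_mul]
  calc ∑ γ : J, X (γ, j) * pderiv (γ, j) F
      = ∑ γ : J, ∑ d ∈ F.support, X (γ, j) * pderiv (γ, j) (monomial d (coeff d F)) := by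
        apply Finset.sum_congr rfl
        intro γ _
        conv_lhs => rw [as_sum F]
        rw [map_sum, Finset.mul_sum]
    _ = ∑ d ∈ F.support, ∑ γ : J, X (γ, j) * pderiv (γ, j) (monomial d (coeff d F)) :=
        Finset.sum_comm
    _ = ∑ d ∈ F.support, monomial d (c • coeff d F) := by
        apply Finset.sum_congr rfl
        intro d hd
        rw [Finset.sum_congr rfl (fun γ _ => key d hd γ), ← map_sum, ← Finset.sum_smul, hc d hd]
    _ = c • F := by
        conv_rhs => rw [as_sum F, Finset.smul_sum]
        apply Finset.sum_congr rfl
        intro d _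
        rw [map_nsmul]

lemma pderiv_pderiv_comm {σ : Type*} (i i' : σ) (F : MvPolynomial σ K) :
    pderiv i (pderiv i' F) = pderiv i' (pderiv i F) := by
  classical
  rcases eq_or_ne i i' with rfl | hne
  · rfl
  · induction F using MvPolynomial.induction_on' with
    | monomial d a =>
      simp only [pderiv_monomial]
      have e1 : ((d - Finsupp.single i' 1) : _ →₀ ℕ) i = d i := by
        simp [Finsupp.tsub_apply, Finsupp.single_eq_of_ne' (Ne.symm hne)]
      have e2 : ((d - Finsupp.single i 1) : _ →₀ ℕ) i' = d i' := by
        simp [Finsupp.tsub_apply, Finsupp.single_eq_of_ne' hne]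
      rw [e1, e2]
      have he : (d - Finsupp.single i' 1) - Finsupp.single i 1
          = (d - Finsupp.single i 1) - Finsupp.single i' 1 := by
        ext b
        simp only [Finsupp.tsub_apply]
        omega
      rw [he]
      congr 1
      push_cast
      ring
    | add p q hp hq => simp [map_add, hp, hq]

/-- The derivation as an explicit finite sum of partial derivatives. -/
noncomputable def Dp (F : MvPolynomial (J × Fin 2) K) : MvPolynomial (J × Fin 2) K :=
  ∑ γ : J, X (γ, 0) * pderiv (γ, 1) F

lemma Dp_add (F G : MvPolynomial (J × Fin 2) K) : Dp (F + G) = Dp F + Dp G := by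
  simp [Dp, map_add, mul_add, Finset.sum_add_distrib]

lemma Dp_sub (F G : MvPolynomial (J × Fin 2) K) : Dp (F - G) = Dp F - Dp G := by
  simp [Dp, map_sub, mul_sub, Finset.sum_sub_distrib]

lemma Dp_X (v : J × Fin 2) :
    Dp (X v : MvPolynomial (J × Fin 2) K) = if v.2 = 0 then 0 else X (v.1, 0) := by
  classical
  obtain ⟨α, i⟩ := v
  fin_cases i <;> simp only [Fin.zero_eta, Fin.mk_one]
  · simp only [Dp]
    rw [if_pos trivial]
    apply Finset.sum_eq_zero
    intro γ _
    rw [pderiv_X_of_ne (by simp), mul_zero]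
  · simp only [Dp]
    rw [if_neg (by simp)]
    rw [Finset.sum_eq_single α]
    · rw [pderiv_X_self, mul_one]
    · intro γ _ hγ
      rw [pderiv_X_of_ne (by simp [Ne.symm hγ]), mul_zero]
    · intro h
      exact absurd (Finset.mem_univ α) h

lemma mkDer_eq_Dp (F : MvPolynomial (J × Fin 2) K) :
    (mkDerivation K (fun v : J × Fin 2 => if v.2 = 0 then 0 else X (v.1, 0))) F = Dp F := by
  induction F using MvPolynomial.induction_on with
  | C a => simp [Dp, derivation_C]
  | add p q hp hq => rw [map_add, hp, hq, Dp_add]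
  | mul_X p v hp =>
    rw [Derivation.leibniz, mkDerivation_X, hp]
    have step : ∀ γ : J, X (γ, 0) * pderiv (γ, 1) (p * X v)
        = (X (γ, 0) * pderiv (γ, 1) p) * X v + p * (X (γ, 0) * pderiv (γ, 1) (X v)) := by
      intro γ
      rw [pderiv_mul]
      ring
    have : Dp (p * X v) = Dp p * X v + p * Dp (X v) := by
      rw [Dp, Finset.sum_congr rfl (fun γ _ => step γ), Finset.sum_add_distrib,
        ← Finset.sum_mul, ← Finset.mul_sum, Dp, Dp]
    rw [this, Dp_X]
    simp only [smul_eq_mul]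
    ring

lemma ker_pderiv_y {F : MvPolynomial (J × Fin 2) K} (hF : Dp F = 0) (δ : J) :
    Dp (pderiv (δ, 1) F) = 0 := by
  have h0 := congrArg (pderiv (δ, (1 : Fin 2))) hF
  rw [Dp, map_sum, map_zero] at h0
  rw [Dp, ← h0]
  apply Finset.sum_congr rfl
  intro γ _
  rw [pderiv_mul, pderiv_X_of_ne (by simp), zero_mul, zero_add,
    pderiv_pderiv_comm]

lemma ker_pderiv_x {F : MvPolynomial (J × Fin 2) K} (hF : Dp F = 0) (γ : J) :
    Dp (pderiv (γ, 0) F) = - pderiv (γ, 1) F := by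
  classical
  have h0 := congrArg (pderiv (γ, (0 : Fin 2))) hF
  rw [Dp, map_sum, map_zero] at h0
  have expand : ∀ δ : J, pderiv (γ, (0:Fin 2)) (X (δ, 0) * pderiv (δ, 1) F)
      = pderiv (γ, 0) (X (δ, 0)) * pderiv (δ, 1) F
        + X (δ, 0) * pderiv (δ, 1) (pderiv (γ, 0) F) := by
    intro δ
    rw [pderiv_mul, pderiv_pderiv_comm]
  rw [Finset.sum_congr rfl (fun δ _ => expand δ), Finset.sum_add_distrib] at h0
  have first : ∑ δ : J, pderiv (γ, (0:Fin 2)) (X (δ, 0)) * pderiv (δ, 1) F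
      = pderiv (γ, 1) F := by
    rw [Finset.sum_eq_single γ]
    · rw [pderiv_X_self, one_mul]
    · intro δ _ hδ
      rw [pderiv_X_of_ne (by simp [hδ]), zero_mul]
    · intro h
      exact absurd (Finset.mem_univ γ) h
  rw [first] at h0
  rw [Dp]
  linear_combination h0

lemma pderiv_x_eq_zero {G : MvPolynomial (J × Fin 2) K} {b : ℕ}
    (h : G.IsWeightedHomogeneous (ww J) (0, b)) (γ : J) : pderiv (γ, 0) G = 0 := by
  apply pderiv_eq_zero_of_notMem_vars
  intro hv
  obtain ⟨d, hd, hdi⟩ := (mem_vars _).1 hv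
  have hw := h (MvPolynomial.mem_support_iff.1 hd)
  rw [weight_eq_sum] at hw
  have h1 : ∑ γ' : J, d (γ', 0) = 0 := (Prod.ext_iff.1 hw).1
  have h2 := (Finset.sum_eq_zero_iff.1 h1) γ (Finset.mem_univ γ)
  exact (Finsupp.mem_support_iff.1 hdi) h2

lemma pderiv_y_eq_zero {G : MvPolynomial (J × Fin 2) K} {a : ℕ}
    (h : G.IsWeightedHomogeneous (ww J) (a, 0)) (δ : J) : pderiv (δ, 1) G = 0 := by
  apply pderiv_eq_zero_of_notMem_vars
  intro hv
  obtain ⟨d, hd, hdi⟩ := (mem_vars _).1 hv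
  have hw := h (MvPolynomial.mem_support_iff.1 hd)
  rw [weight_eq_sum] at hw
  have h1 : ∑ γ' : J, d (γ', 1) = 0 := (Prod.ext_iff.1 hw).2
  have h2 := (Finset.sum_eq_zero_iff.1 h1) δ (Finset.mem_univ δ)
  exact (Finsupp.mem_support_iff.1 hdi) h2

lemma ww_x (γ : J) : ww J (γ, 0) = (1, 0) := if_pos rfl

lemma ww_y (γ : J) : ww J (γ, 1) = (0, 1) := if_neg (by simp)

lemma Dp_wh0 {G : MvPolynomial (J × Fin 2) K} {a : ℕ}
    (h : G.IsWeightedHomogeneous (ww J) (a, 0)) : Dp G = 0 := by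
  rw [Dp]
  apply Finset.sum_eq_zero
  intro γ _
  rw [pderiv_y_eq_zero h γ, mul_zero]

lemma Dp_wh {G : MvPolynomial (J × Fin 2) K} {a b : ℕ}
    (h : G.IsWeightedHomogeneous (ww J) (a, b + 1)) :
    (Dp G).IsWeightedHomogeneous (ww J) (a + 1, b) := by
  rw [Dp, ← mem_weightedHomogeneousSubmodule]
  apply Submodule.sum_mem
  intro γ _
  rw [mem_weightedHomogeneousSubmodule]
  have h1 : (X ((γ, 0) : J × Fin 2)
      : MvPolynomial (J × Fin 2) K).IsWeightedHomogeneous (ww J) (1, 0) := by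
    have := isWeightedHomogeneous_X K (ww J) ((γ, 0) : J × Fin 2)
    rwa [ww_x] at this
  have h2 : (pderiv ((γ, 1) : J × Fin 2) G).IsWeightedHomogeneous (ww J) (a, b) :=
    isWH_pderiv _ h (by rw [ww_y, Prod.mk_add_mk]; simp)
  have := h1.mul h2
  rwa [Prod.mk_add_mk, Nat.add_comm 1 a, Nat.zero_add] at this

lemma key {F : MvPolynomial (J × Fin 2) K} (hF : Dp F = 0) {s t : ℕ}
    (hhom : F.IsWeightedHomogeneous (ww J) (s, t + 1)) :
    ∑ γ : J, ∑ δ : J,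
        (X (γ, 0) * X (δ, 1) - X (γ, 1) * X (δ, 0)) * pderiv (γ, 0) (pderiv (δ, 1) F)
      = ((t + 1) * (s + 1)) • F := by
  have hGhom : ∀ δ : J, (pderiv ((δ, 1) : J × Fin 2) F).IsWeightedHomogeneous (ww J) (s, t) :=
    fun δ => isWH_pderiv _ hhom (by rw [ww_y, Prod.mk_add_mk]; simp)
  have hA : ∀ δ : J, ∑ γ : J, X (γ, 0) * pderiv (γ, 0) (pderiv (δ, 1) F)
      = s • pderiv (δ, 1) F := by
    intro δ
    apply euler (j := 0)
    intro d hd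
    have hw := hGhom δ (MvPolynomial.mem_support_iff.1 hd)
    rw [weight_eq_sum] at hw
    exact (Prod.ext_iff.1 hw).1
  have hY : ∑ δ : J, X (δ, 1) * pderiv (δ, 1) F = (t + 1) • F := by
    apply euler (j := 1)
    intro d hd
    have hw := hhom (MvPolynomial.mem_support_iff.1 hd)
    rw [weight_eq_sum] at hw
    exact (Prod.ext_iff.1 hw).2
  have hB : ∀ γ : J, ∑ δ : J, X (δ, 0) * pderiv (δ, 1) (pderiv (γ, 0) F)
      = - pderiv (γ, 1) F := fun γ => ker_pderiv_x hF γ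
  calc ∑ γ : J, ∑ δ : J,
        (X (γ, 0) * X (δ, 1) - X (γ, 1) * X (δ, 0)) * pderiv (γ, 0) (pderiv (δ, 1) F)
      = (∑ γ : J, ∑ δ : J, X (δ, 1) * (X (γ, 0) * pderiv (γ, 0) (pderiv (δ, 1) F)))
        - (∑ γ : J, X (γ, 1) * ∑ δ : J, X (δ, 0) * pderiv (δ, 1) (pderiv (γ, 0) F)) := by
        rw [← Finset.sum_sub_distrib]
        apply Finset.sum_congr rfl
        intro γ _
        rw [Finset.mul_sum, ← Finset.sum_sub_distrib]
        apply Finset.sum_congr rfl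
        intro δ _
        rw [pderiv_pderiv_comm ((δ, 1) : J × Fin 2) ((γ, 0) : J × Fin 2) F]
        ring
    _ = (∑ δ : J, X (δ, 1) * (s • pderiv (δ, 1) F)) - (∑ γ : J, X (γ, 1) * (- pderiv (γ, 1) F)) := by
        rw [Finset.sum_comm]
        congr 1
        · apply Finset.sum_congr rfl
          intro δ _
          rw [← Finset.mul_sum, hA δ]
        · apply Finset.sum_congr rfl
          intro γ _
          rw [hB γ]
    _ = s • ((t + 1) • F) + (t + 1) • F := by
        have e1 : ∑ δ : J, X (δ, 1) * (s • pderiv ((δ, 1) : J × Fin 2) F)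
            = s • ((t + 1) • F) := by
          rw [← hY, Finset.smul_sum]
          apply Finset.sum_congr rfl
          intro δ _
          rw [mul_smul_comm]
        have e2 : ∑ γ : J, X (γ, 1) * (- pderiv ((γ, 1) : J × Fin 2) F)
            = - ((t + 1) • F) := by
          rw [← hY, ← Finset.sum_neg_distrib]
          apply Finset.sum_congr rfl
          intro γ _
          rw [mul_neg]
        rw [e1, e2, sub_neg_eq_add]
    _ = ((t + 1) * (s + 1)) • F := by
        rw [smul_smul, ← add_smul]
        congr 1
        ring

def gens (K : Type*) [Field K] (J : Type*) : Set (MvPolynomial (J × Fin 2) K) :=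
  {P | ∃ α : J, P = X (α, 0)} ∪
    {P | ∃ α β : J, P = X (α, 0) * X (β, 1) - X (α, 1) * X (β, 0)}

lemma main_ind (t : ℕ) : ∀ (s : ℕ) (F : MvPolynomial (J × Fin 2) K), Dp F = 0 →
    F.IsWeightedHomogeneous (ww J) (s, t) → F ∈ Algebra.adjoin K (gens K J) := by
  induction t with
  | zero =>
    intro s F _ hhom
    have hvars : ↑F.vars ⊆ {v : J × Fin 2 | v.2 = 0} := by
      intro v hv
      obtain ⟨d, hd, hdi⟩ := (mem_vars v).1 hv
      have hw := hhom (MvPolynomial.mem_support_iff.1 hd)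
      rw [weight_eq_sum] at hw
      have h1 : ∑ γ' : J, d (γ', 1) = 0 := (Prod.ext_iff.1 hw).2
      obtain ⟨α, i⟩ := v
      fin_cases i
      · exact rfl
      · exfalso
        have h2 := (Finset.sum_eq_zero_iff.1 h1) α (Finset.mem_univ α)
        exact (Finsupp.mem_support_iff.1 hdi) h2
    have hsup : F ∈ supported K {v : J × Fin 2 | v.2 = 0} := mem_supported.2 hvars
    rw [supported_eq_adjoin_X] at hsup
    refine Algebra.adjoin_mono ?_ hsup
    rintro P ⟨v, hv, rfl⟩
    refine Or.inl ⟨v.1, ?_⟩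
    have hv0 : v = (v.1, 0) := Prod.ext rfl hv
    rw [← hv0]
  | succ t ih =>
    intro s F hF hhom
    set A := Algebra.adjoin K (gens K J) with hA
    have hbmem : ∀ γ δ : J,
        (X (γ, 0) * X (δ, 1) - X (γ, 1) * X (δ, 0) : MvPolynomial (J × Fin 2) K) ∈ A :=
      fun γ δ => Algebra.subset_adjoin (Or.inr ⟨γ, δ, rfl⟩)
    have hGker : ∀ δ : J, Dp (pderiv ((δ, 1) : J × Fin 2) F) = 0 := ker_pderiv_y hF
    have hGhom : ∀ δ : J, (pderiv ((δ, 1) : J × Fin 2) F).IsWeightedHomogeneous (ww J) (s, t) :=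
      fun δ => isWH_pderiv _ hhom (by rw [ww_y, Prod.mk_add_mk]; simp)
    have hHker : ∀ γ δ : J, Dp (pderiv ((γ, 0) : J × Fin 2) (pderiv ((δ, 1) : J × Fin 2) F)
        - pderiv ((δ, 0) : J × Fin 2) (pderiv ((γ, 1) : J × Fin 2) F)) = 0 := by
      intro γ δ
      rw [Dp_sub, ker_pderiv_x (hGker δ) γ, ker_pderiv_x (hGker γ) δ,
        pderiv_pderiv_comm ((γ, 1) : J × Fin 2) ((δ, 1) : J × Fin 2) F, sub_self]
    have hHmem : ∀ γ δ : J, pderiv ((γ, 0) : J × Fin 2) (pderiv ((δ, 1) : J × Fin 2) F)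
        - pderiv ((δ, 0) : J × Fin 2) (pderiv ((γ, 1) : J × Fin 2) F) ∈ A := by
      intro γ δ
      cases s with
      | zero =>
        rw [pderiv_x_eq_zero (hGhom δ) γ, pderiv_x_eq_zero (hGhom γ) δ, sub_self]
        exact Subalgebra.zero_mem A
      | succ s' =>
        have h1 := isWH_pderiv (K := K) (m' := (s', t)) ((γ, 0) : J × Fin 2) (hGhom δ)
          (by rw [ww_x, Prod.mk_add_mk]; simp)
        have h2 := isWH_pderiv (K := K) (m' := (s', t)) ((δ, 0) : J × Fin 2) (hGhom γ)
          (by rw [ww_x, Prod.mk_add_mk]; simp)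
        refine ih s' _ (hHker γ δ) ?_
        rw [← mem_weightedHomogeneousSubmodule]
        exact Submodule.sub_mem _ ((mem_weightedHomogeneousSubmodule _ _ _ _).2 h1)
          ((mem_weightedHomogeneousSubmodule _ _ _ _).2 h2)
    have hsum_mem : (∑ γ : J, ∑ δ : J,
        (X (γ, 0) * X (δ, 1) - X (γ, 1) * X (δ, 0)) *
          (pderiv ((γ, 0) : J × Fin 2) (pderiv ((δ, 1) : J × Fin 2) F)
            - pderiv ((δ, 0) : J × Fin 2) (pderiv ((γ, 1) : J × Fin 2) F))) ∈ A := by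
      apply Subalgebra.sum_mem
      intro γ _
      apply Subalgebra.sum_mem
      intro δ _
      exact Subalgebra.mul_mem A (hbmem γ δ) (hHmem γ δ)
    have hsplit : ∑ γ : J, ∑ δ : J,
        (X (γ, 0) * X (δ, 1) - X (γ, 1) * X (δ, 0)) *
          (pderiv ((γ, 0) : J × Fin 2) (pderiv ((δ, 1) : J × Fin 2) F)
            - pderiv ((δ, 0) : J × Fin 2) (pderiv ((γ, 1) : J × Fin 2) F))
        = (∑ γ : J, ∑ δ : J, (X (γ, 0) * X (δ, 1) - X (γ, 1) * X (δ, 0)) *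
            pderiv ((γ, 0) : J × Fin 2) (pderiv ((δ, 1) : J × Fin 2) F))
          - (∑ γ : J, ∑ δ : J, (X (γ, 0) * X (δ, 1) - X (γ, 1) * X (δ, 0)) *
            pderiv ((δ, 0) : J × Fin 2) (pderiv ((γ, 1) : J × Fin 2) F)) := by
      rw [← Finset.sum_sub_distrib]
      apply Finset.sum_congr rfl
      intro γ _
      rw [← Finset.sum_sub_distrib]
      apply Finset.sum_congr rfl
      intro δ _
      rw [mul_sub]
    have hswap : ∑ γ : J, ∑ δ : J, (X (γ, 0) * X (δ, 1) - X (γ, 1) * X (δ, 0)) *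
            pderiv ((δ, 0) : J × Fin 2) (pderiv ((γ, 1) : J × Fin 2) F)
        = - ∑ γ : J, ∑ δ : J, (X (γ, 0) * X (δ, 1) - X (γ, 1) * X (δ, 0)) *
            pderiv ((γ, 0) : J × Fin 2) (pderiv ((δ, 1) : J × Fin 2) F) := by
      rw [Finset.sum_comm, ← Finset.sum_neg_distrib]
      apply Finset.sum_congr rfl
      intro γ _
      rw [← Finset.sum_neg_distrib]
      apply Finset.sum_congr rfl
      intro δ _
      ring
    have hid : ∑ γ : J, ∑ δ : J,
        (X (γ, 0) * X (δ, 1) - X (γ, 1) * X (δ, 0)) *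
          (pderiv ((γ, 0) : J × Fin 2) (pderiv ((δ, 1) : J × Fin 2) F)
            - pderiv ((δ, 0) : J × Fin 2) (pderiv ((γ, 1) : J × Fin 2) F))
        = (2 * ((t + 1) * (s + 1))) • F := by
      rw [hsplit, hswap, sub_neg_eq_add, key hF hhom, ← two_smul ℕ, smul_smul]
    have hn : ((2 * ((t + 1) * (s + 1)) : ℕ) : K) ≠ 0 := by
      exact Nat.cast_ne_zero.2 (by positivity)
    have hmem2 : ((2 * ((t + 1) * (s + 1)) : ℕ) : K) • F ∈ A := by
      rw [Nat.cast_smul_eq_nsmul, ← hid]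
      exact hsum_mem
    have := Subalgebra.smul_mem A hmem2 (((2 * ((t + 1) * (s + 1)) : ℕ) : K))⁻¹
    rwa [inv_smul_smul₀ hn] at this

lemma Dp_zero : Dp (0 : MvPolynomial (J × Fin 2) K) = 0 := by
  simp [Dp]

lemma Dp_sum {ι : Type*} (s : Finset ι) (f : ι → MvPolynomial (J × Fin 2) K) :
    Dp (∑ i ∈ s, f i) = ∑ i ∈ s, Dp (f i) := by
  simp only [Dp, map_sum, Finset.mul_sum]
  rw [Finset.sum_comm]

lemma comp_ker {F : MvPolynomial (J × Fin 2) K} (hF : Dp F = 0) (m : ℕ × ℕ) :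
    Dp (weightedHomogeneousComponent (ww J) m F) = 0 := by
  classical
  have hfin := weightedHomogeneousComponent_finsupp (w := ww J) F
  set T := hfin.toFinset with hT
  by_cases hmT : m ∈ T
  · have hdecomp : ∑ m' ∈ T, weightedHomogeneousComponent (ww J) m' F = F := by
      rw [← finsum_eq_sum _ hfin, sum_weightedHomogeneousComponent]
    have hDsum : ∑ m' ∈ T, Dp (weightedHomogeneousComponent (ww J) m' F) = 0 := by
      rw [← Dp_sum, hdecomp, hF]
    obtain ⟨a, b⟩ := m
    cases b with
    | zero => exact Dp_wh0 (weightedHomogeneousComponent_isWeightedHomogeneous (a, 0) F)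
    | succ b' =>
      have hC : (weightedHomogeneousComponent (ww J) (a, b' + 1)
          F).IsWeightedHomogeneous (ww J) (a, b' + 1) :=
        weightedHomogeneousComponent_isWeightedHomogeneous (a, b' + 1) F
      have hsum0 : ∑ m' ∈ T, weightedHomogeneousComponent (ww J) (a + 1, b')
          (Dp (weightedHomogeneousComponent (ww J) m' F)) = 0 := by
        rw [← map_sum, hDsum, map_zero]
      rw [Finset.sum_eq_single (a, b' + 1)] at hsum0
      · rwa [(Dp_wh hC).weightedHomogeneousComponent_same] at hsum0
      · rintro ⟨a', b''⟩ _ hne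
        cases b'' with
        | zero =>
          rw [Dp_wh0 (weightedHomogeneousComponent_isWeightedHomogeneous (a', 0) F), map_zero]
        | succ b₂ =>
          apply (Dp_wh (weightedHomogeneousComponent_isWeightedHomogeneous
            (a', b₂ + 1) F)).weightedHomogeneousComponent_ne
          intro heq
          apply hne
          have h1 := (Prod.ext_iff.1 heq).1
          have h2 := (Prod.ext_iff.1 heq).2
          simp only [Prod.mk.injEq]
          omega
      · intro habs
        exact absurd hmT habs
  · have hzero : weightedHomogeneousComponent (ww J) m F = 0 := by
      by_contra hne
      exact hmT (hfin.mem_toFinset.2 hne)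
    rw [hzero, Dp_zero]

end FFTAux

open FFTAux in
/-- First Fundamental Theorem, semi-invariants: for a finite set `J` of
symbol letters and the derivation `D` of `R_J = K[α₀, α₁ : α ∈ J]` with `D(α₀) = 0`,
`D(α₁) = α₀`, the kernel of `D` is generated as a `K`-algebra by the variables `α₀`
together with the brackets `[α,β] = α₀β₁ − α₁β₀`. -/
theorem stmt_0 (K : Type*) [Field K] [CharZero K] (J : Type*) [Fintype J]
    (D : Derivation K (MvPolynomial (J × Fin 2) K) (MvPolynomial (J × Fin 2) K))
    (hD : D = MvPolynomial.mkDerivation K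
      (fun v : J × Fin 2 => if v.2 = 0 then 0 else X (v.1, 0))) :
    ∀ F : MvPolynomial (J × Fin 2) K,
      D F = 0 ↔ F ∈ Algebra.adjoin K
        ({P | ∃ α : J, P = X (α, 0)} ∪
         {P | ∃ α β : J, P = X (α, 0) * X (β, 1) - X (α, 1) * X (β, 0)} :
          Set (MvPolynomial (J × Fin 2) K)) := by
  subst hD
  intro F
  constructor
  · intro hDF
    classical
    have hF : Dp F = 0 := by rwa [mkDer_eq_Dp] at hDF
    have hfin := weightedHomogeneousComponent_finsupp (w := ww J) F
    have hdecomp : ∑ m' ∈ hfin.toFinset, weightedHomogeneousComponent (ww J) m' F = F := by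
      rw [← finsum_eq_sum _ hfin, sum_weightedHomogeneousComponent]
    rw [← hdecomp]
    apply Subalgebra.sum_mem
    rintro ⟨a, b⟩ _
    exact main_ind b a _ (comp_ker hF (a, b))
      (weightedHomogeneousComponent_isWeightedHomogeneous (a, b) F)
  · intro hmem
    induction hmem using Algebra.adjoin_induction with
    | mem x hx =>
      rcases hx with ⟨α, rfl⟩ | ⟨α, β, rfl⟩
      · rw [mkDerivation_X]
        simp
      · rw [map_sub, Derivation.leibniz, Derivation.leibniz, mkDerivation_X, mkDerivation_X,
          mkDerivation_X, mkDerivation_X]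
        simp only [smul_eq_mul]
        norm_num
        ring
    | algebraMap r => exact Derivation.map_algebraMap _ r
    | add x y hx hy hx' hy' => rw [map_add, hx', hy', add_zero]
    | mul x y hx hy hx' hy' => rw [Derivation.leibniz, hx', hy', smul_zero, smul_zero, add_zero]
end

section
/- Let K be a field of characteristic 0 and J a finite set. For α ≠ β in J define the convolution operator Conv_{α,β} : R_J → R_J by Conv_{α,β}(P) := [α,β]·∂²P/(∂α₀ ∂β₀), where [α,β] = α₀β₁ − α₁β₀. Then ker D equals the K-subalgebra of R_J generated by the variables γ₀ (γ ∈ J) together with all convolutions Conv_{α,β}(M) of monomials M in the variables {γ₀ : γ ∈ J}. -/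
open MvPolynomial Finset

namespace Stmt7

noncomputable section
set_option linter.unusedSectionVars false

section General
variable {K : Type*} [Field K] {σ : Type*} [Fintype σ]

lemma pderiv_comm (i j : σ) (P : MvPolynomial σ K) :
    pderiv i (pderiv j P) = pderiv j (pderiv i P) := by
  rcases eq_or_ne i j with rfl | hij
  · rfl
  · induction P using MvPolynomial.induction_on' with
    | monomial s a =>
        classical
        simp only [pderiv_monomial]
        rw [tsub_right_comm]
        congr 1
        rw [Finsupp.tsub_apply, Finsupp.tsub_apply, Finsupp.single_eq_of_ne hij,
          Finsupp.single_eq_of_ne (Ne.symm hij)]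
        simp only [Nat.sub_zero]
        ring
    | add p q hp hq => simp only [map_add, hp, hq]

lemma X_mul_pderiv_monomial (i : σ) (s : σ →₀ ℕ) (a : K) :
    (X i : MvPolynomial σ K) * pderiv i (monomial s a) = s i • monomial s a := by
  classical
  rw [pderiv_monomial]
  rcases Nat.eq_zero_or_pos (s i) with h | h
  · simp [h]
  · rw [X, monomial_mul, one_mul, add_tsub_cancel_of_le (Finsupp.single_le_iff.mpr h),
      smul_monomial]
    congr 1
    rw [nsmul_eq_mul, mul_comm]
  
lemma weight_eq_sum (w : σ → ℕ) (s : σ →₀ ℕ) :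
    Finsupp.weight w s = ∑ i : σ, w i * s i := by
  rw [Finsupp.weight_apply, Finsupp.sum_fintype]
  · exact Finset.sum_congr rfl fun i _ => by rw [smul_eq_mul, mul_comm]
  · intro i; simp

lemma euler {w : σ → ℕ} {P : MvPolynomial σ K} {n : ℕ}
    (h : IsWeightedHomogeneous w P n) :
    ∑ i : σ, w i • (X i * pderiv i P) = n • P := by
  conv_lhs => rw [as_sum P]
  conv_rhs => rw [as_sum P]
  simp only [map_sum, Finset.mul_sum, Finset.smul_sum]
  rw [Finset.sum_comm]
  refine Finset.sum_congr rfl fun s hs => ?_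
  have hw : Finsupp.weight w s = n := h (mem_support_iff.mp hs)
  calc ∑ i : σ, w i • (X i * pderiv i (monomial s (coeff s P)))
      = ∑ i : σ, (w i * s i) • monomial s (coeff s P) := by
        refine Finset.sum_congr rfl fun i _ => ?_
        rw [X_mul_pderiv_monomial, smul_smul]
    _ = n • monomial s (coeff s P) := by
        rw [← Finset.sum_smul, ← weight_eq_sum, hw]

lemma isWeightedHomogeneous_pderiv {w : σ → ℕ} {P : MvPolynomial σ K} {n : ℕ} (i : σ)
    (h : IsWeightedHomogeneous w P n) :
    IsWeightedHomogeneous w (pderiv i P) (n - w i) := by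
  classical
  have hrw : pderiv i P = ∑ s ∈ P.support, monomial (s - Finsupp.single i 1) (coeff s P * s i) := by
    conv_lhs => rw [as_sum P]
    rw [map_sum]
    exact Finset.sum_congr rfl fun s _ => pderiv_monomial
  rw [hrw]
  apply IsWeightedHomogeneous.sum
  intro s hs
  rcases Nat.eq_zero_or_pos (s i) with h0 | h0
  · rw [h0]
    simp only [Nat.cast_zero, mul_zero, map_zero]
    exact isWeightedHomogeneous_zero _ _ _
  · apply isWeightedHomogeneous_monomial
    have hw : Finsupp.weight w s = n := h (mem_support_iff.mp hs)
    have hle : Finsupp.single i 1 ≤ s := Finsupp.single_le_iff.mpr h0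
    have hadd : (s - Finsupp.single i 1) + Finsupp.single i 1 = s := tsub_add_cancel_of_le hle
    have := congrArg (Finsupp.weight w) hadd
    rw [map_add] at this
    have hsingle : Finsupp.weight w (Finsupp.single i 1) = w i := by
      rw [Finsupp.weight_apply, Finsupp.sum_single_index] <;> simp
    rw [hsingle, hw] at this
    omega

end General

variable {K : Type*} [Field K] {J : Type*} [Fintype J]


local notation "R" => MvPolynomial (J × Fin 2) K

lemma derivation_sum_apply {ι M : Type*} [AddCommMonoid M] [Module K M]
    [Module (MvPolynomial (J × Fin 2) K) M] (s : Finset ι)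
    (d : ι → Derivation K (MvPolynomial (J × Fin 2) K) M) (a : R) :
    (∑ i ∈ s, d i) a = ∑ i ∈ s, d i a := by
  classical
  induction s using Finset.induction with
  | empty => simp
  | insert _ _ h ih => simp [Finset.sum_insert h, ih]

/-- the raising operator as a bundled derivation -/
def eder : Derivation K R R :=
  ∑ γ : J, (X (γ, 0) : R) • pderiv (γ, 1)

lemma eder_apply (P : R) : eder (J := J) P = ∑ γ : J, X (γ, 0) * pderiv (γ, 1) P := by
  rw [eder, derivation_sum_apply]
  simp [smul_eq_mul]

lemma D_eq_eder (D : Derivation K R R)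
    (hD : D = MvPolynomial.mkDerivation K
      (fun v : J × Fin 2 => if v.2 = 0 then 0 else X (v.1, 0))) :
    D = eder := by
  rw [hD]
  refine MvPolynomial.derivation_ext fun i => ?_
  rw [mkDerivation_X, eder_apply]
  obtain ⟨γ, j⟩ := i
  rcases eq_or_ne j 0 with hj | hj
  · subst hj; simp
  · have hj1 : j = 1 := by omega
    subst hj1
    rw [Finset.sum_eq_single γ]
    · simp
    · intro b _ hb
      rw [pderiv_X_of_ne (by simp [hb.symm] : ((γ : J), (1:Fin 2)) ≠ (b, 1)), mul_zero]
    · simp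

section Ops
variable [DecidableEq J] [CharZero K]

def wX : J × Fin 2 → ℕ := fun i => if i.2 = 0 then 1 else 0
def wY : J × Fin 2 → ℕ := fun i => if i.2 = 0 then 0 else 1

def eop (P : R) : R := ∑ γ : J, X (γ, (0:Fin 2)) * pderiv (γ, (1:Fin 2)) P
def fop (P : R) : R := ∑ γ : J, X (γ, (1:Fin 2)) * pderiv (γ, (0:Fin 2)) P
def ExOp (P : R) : R := ∑ γ : J, X (γ, (0:Fin 2)) * pderiv (γ, (0:Fin 2)) P
def EyOp (P : R) : R := ∑ γ : J, X (γ, (1:Fin 2)) * pderiv (γ, (1:Fin 2)) P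
def ubr (β γ : J) : R := X (β, (0:Fin 2)) * X (γ, (1:Fin 2)) - X (γ, (0:Fin 2)) * X (β, (1:Fin 2))
def Wop (β γ : J) (P : R) : R :=
  pderiv (β, (0:Fin 2)) (pderiv (γ, (1:Fin 2)) P) - pderiv (γ, (0:Fin 2)) (pderiv (β, (1:Fin 2)) P)
def Om (P : R) : R :=
  ∑ β : J, ∑ γ : J, ubr β γ * pderiv (β, (0:Fin 2)) (pderiv (γ, (1:Fin 2)) P)

lemma pdX_00 (β γ : J) :
    pderiv (γ, (0:Fin 2)) (X (β, (0:Fin 2)) : R) = if γ = β then 1 else 0 := by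
  split_ifs with h
  · subst h; exact pderiv_X_self _
  · exact pderiv_X_of_ne (by simp [Ne, Prod.ext_iff, (Ne.symm h)])

lemma pdX_11 (β γ : J) :
    pderiv (γ, (1:Fin 2)) (X (β, (1:Fin 2)) : R) = if γ = β then 1 else 0 := by
  split_ifs with h
  · subst h; exact pderiv_X_self _
  · exact pderiv_X_of_ne (by simp [Ne, Prod.ext_iff, (Ne.symm h)])

lemma pdX_10 (β γ : J) :
    pderiv (γ, (1:Fin 2)) (X (β, (0:Fin 2)) : R) = 0 :=
  pderiv_X_of_ne (by simp [Ne, Prod.ext_iff])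

lemma pdX_01 (β γ : J) :
    pderiv (γ, (0:Fin 2)) (X (β, (1:Fin 2)) : R) = 0 :=
  pderiv_X_of_ne (by simp [Ne, Prod.ext_iff])

lemma fop_zero : fop (0 : R) = 0 := by simp [fop]

lemma eop_sub (P Q : R) : eop (P - Q) = eop P - eop Q := by
  simp [eop, map_sub, mul_sub, Finset.sum_sub_distrib]

lemma Wop_zero (β γ : J) : Wop β γ (0 : R) = 0 := by simp [Wop]

-- C1 : ∂/∂y_γ commutes with e
lemma pd1_eop (γ : J) (P : R) :
    pderiv (γ, (1:Fin 2)) (eop P) = eop (pderiv (γ, (1:Fin 2)) P) := by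
  rw [eop, eop, map_sum]
  refine Finset.sum_congr rfl fun δ _ => ?_
  rw [pderiv_mul, pdX_10, zero_mul, zero_add, pderiv_comm]

-- C2 : ∂/∂x_β almost commutes with e
lemma pd0_eop (β : J) (P : R) :
    pderiv (β, (0:Fin 2)) (eop P) = eop (pderiv (β, (0:Fin 2)) P) + pderiv (β, (1:Fin 2)) P := by
  rw [eop, eop, map_sum]
  have : ∀ δ : J, pderiv (β, (0:Fin 2)) (X (δ, (0:Fin 2)) * pderiv (δ, (1:Fin 2)) P)
      = (if β = δ then 1 else 0) * pderiv (δ, (1:Fin 2)) P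
        + X (δ, (0:Fin 2)) * pderiv (δ, (1:Fin 2)) (pderiv (β, (0:Fin 2)) P) := by
    intro δ
    rw [pderiv_mul, pdX_00, pderiv_comm]
  rw [Finset.sum_congr rfl fun δ _ => this δ, Finset.sum_add_distrib, add_comm]
  congr 1
  simp only [ite_mul, one_mul, zero_mul]
  rw [Finset.sum_ite_eq, if_pos (Finset.mem_univ β)]

-- e commutes with Wop
lemma eop_Wop (β γ : J) (P : R) :
    eop (Wop β γ P) = Wop β γ (eop P) := by
  rw [Wop, Wop]
  simp only [eop_sub, pd1_eop, pd0_eop]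
  rw [pderiv_comm (β, (1:Fin 2)) (γ, (1:Fin 2)) P]
  ring

-- E1 : f ∘ e expansion
lemma fop_eop_expand (P : R) :
    fop (eop P) =
      (∑ β : J, ∑ γ : J, X (β, (1:Fin 2)) * (X (γ, (0:Fin 2)) *
          pderiv (β, (0:Fin 2)) (pderiv (γ, (1:Fin 2)) P))) + EyOp P := by
  rw [fop, EyOp, ← Finset.sum_add_distrib]
  refine Finset.sum_congr rfl fun β _ => ?_
  rw [pd0_eop, mul_add, eop, Finset.mul_sum]
  refine congrArg (· + X (β, (1:Fin 2)) * pderiv (β, (1:Fin 2)) P) ?_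
  refine Finset.sum_congr rfl fun γ _ => ?_
  rw [pderiv_comm ((γ, (1:Fin 2))) ((β, (0:Fin 2))) P]

-- E2 : Ex ∘ Ey expansion
lemma Ex_Ey_expand (P : R) :
    ExOp (EyOp P) =
      ∑ β : J, ∑ γ : J, X (β, (0:Fin 2)) * X (γ, (1:Fin 2)) *
        pderiv (β, (0:Fin 2)) (pderiv (γ, (1:Fin 2)) P) := by
  rw [ExOp]
  refine Finset.sum_congr rfl fun β _ => ?_
  rw [EyOp, map_sum, Finset.mul_sum]
  refine Finset.sum_congr rfl fun γ _ => ?_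
  rw [pderiv_mul, pdX_01, zero_mul, zero_add]
  ring

lemma Om_expand (P : R) :
    Om P = ExOp (EyOp P) + EyOp P - fop (eop P) := by
  have key : Om P = (∑ β : J, ∑ γ : J, X (β, (0:Fin 2)) * X (γ, (1:Fin 2)) *
        pderiv (β, (0:Fin 2)) (pderiv (γ, (1:Fin 2)) P))
      - ∑ β : J, ∑ γ : J, X (β, (1:Fin 2)) * (X (γ, (0:Fin 2)) *
          pderiv (β, (0:Fin 2)) (pderiv (γ, (1:Fin 2)) P)) := by
    rw [Om, ← Finset.sum_sub_distrib]
    refine Finset.sum_congr rfl fun β _ => ?_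
    rw [← Finset.sum_sub_distrib]
    refine Finset.sum_congr rfl fun γ _ => ?_
    rw [ubr]; ring
  rw [Ex_Ey_expand, fop_eop_expand, key]
  ring

lemma sum_ubr_Wop (P : R) :
    ∑ β : J, ∑ γ : J, ubr β γ * Wop β γ P = 2 • Om P := by
  have split : ∑ β : J, ∑ γ : J, ubr β γ * Wop β γ P
      = Om P - ∑ β : J, ∑ γ : J, ubr β γ * pderiv (γ, (0:Fin 2)) (pderiv (β, (1:Fin 2)) P) := by
    rw [Om, ← Finset.sum_sub_distrib]
    refine Finset.sum_congr rfl fun β _ => ?_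
    rw [← Finset.sum_sub_distrib]
    refine Finset.sum_congr rfl fun γ _ => ?_
    rw [Wop]; ring
  have swap : ∑ β : J, ∑ γ : J, ubr β γ * pderiv (γ, (0:Fin 2)) (pderiv (β, (1:Fin 2)) P)
      = - Om P := by
    rw [Finset.sum_comm, Om, ← Finset.sum_neg_distrib]
    refine Finset.sum_congr rfl fun β _ => ?_
    rw [← Finset.sum_neg_distrib]
    refine Finset.sum_congr rfl fun γ _ => ?_
    rw [ubr, ubr]; ring
  rw [split, swap, two_smul]
  ring

lemma IWH_sub {σ : Type*} {K : Type*} [Field K] {w : σ → ℕ} {φ ψ : MvPolynomial σ K} {n : ℕ}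
    (hφ : IsWeightedHomogeneous w φ n) (hψ : IsWeightedHomogeneous w ψ n) :
    IsWeightedHomogeneous w (φ - ψ) n := by
  rw [← mem_weightedHomogeneousSubmodule] at hφ hψ ⊢
  exact Submodule.sub_mem _ hφ hψ

lemma eop_eq_eder (P : R) : eop P = eder P := by rw [eder_apply, eop]

lemma eulerX {P : R} {p : ℕ} (h : IsWeightedHomogeneous wX P p) : ExOp P = p • P := by
  have h2 := euler (w := wX) h
  rw [Fintype.sum_prod_type] at h2
  simp only [Fin.sum_univ_two, wX] at h2
  norm_num at h2
  rw [ExOp, nsmul_eq_mul]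
  exact h2

lemma eulerY {P : R} {q : ℕ} (h : IsWeightedHomogeneous wY P q) : EyOp P = q • P := by
  have h2 := euler (w := wY) h
  rw [Fintype.sum_prod_type] at h2
  simp only [Fin.sum_univ_two, wY] at h2
  norm_num at h2
  rw [EyOp, nsmul_eq_mul]
  exact h2

lemma pderiv0_wX {P : R} {p : ℕ} (h : IsWeightedHomogeneous wX P p) (β : J) :
    IsWeightedHomogeneous wX (pderiv (β, (0:Fin 2)) P) (p - 1) := by
  simpa [wX] using isWeightedHomogeneous_pderiv (β, (0:Fin 2)) h

lemma pderiv0_wY {P : R} {q : ℕ} (h : IsWeightedHomogeneous wY P q) (β : J) :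
    IsWeightedHomogeneous wY (pderiv (β, (0:Fin 2)) P) q := by
  simpa [wY] using isWeightedHomogeneous_pderiv (β, (0:Fin 2)) h

lemma pderiv1_wX {P : R} {p : ℕ} (h : IsWeightedHomogeneous wX P p) (β : J) :
    IsWeightedHomogeneous wX (pderiv (β, (1:Fin 2)) P) p := by
  have := isWeightedHomogeneous_pderiv (w := wX) (β, (1:Fin 2)) h
  simpa [wX] using this

lemma pderiv1_wY {P : R} {q : ℕ} (h : IsWeightedHomogeneous wY P q) (β : J) :
    IsWeightedHomogeneous wY (pderiv (β, (1:Fin 2)) P) (q - 1) := by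
  have := isWeightedHomogeneous_pderiv (w := wY) (β, (1:Fin 2)) h
  simpa [wY] using this

lemma Wop_wX {P : R} {p : ℕ} (h : IsWeightedHomogeneous wX P p) (β γ : J) :
    IsWeightedHomogeneous wX (Wop β γ P) (p - 1) := by
  rw [Wop]
  exact IWH_sub (pderiv0_wX (pderiv1_wX h γ) β) (pderiv0_wX (pderiv1_wX h β) γ)

lemma Wop_wY {P : R} {q : ℕ} (h : IsWeightedHomogeneous wY P q) (β γ : J) :
    IsWeightedHomogeneous wY (Wop β γ P) (q - 1) := by
  rw [Wop]
  exact IWH_sub (pderiv0_wY (pderiv1_wY h γ) β) (pderiv0_wY (pderiv1_wY h β) γ)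

lemma ExOp_nsmul (n : ℕ) (P : R) : ExOp (n • P) = n • ExOp P := by
  rw [ExOp, ExOp, Finset.smul_sum]
  refine Finset.sum_congr rfl fun γ _ => ?_
  rw [map_nsmul, mul_smul_comm]

lemma Om_eq {P : R} {p q : ℕ} (hx : IsWeightedHomogeneous wX P p)
    (hy : IsWeightedHomogeneous wY P q) (h0 : eop P = 0) :
    Om P = (q * p + q) • P := by
  rw [Om_expand, h0, fop_zero, sub_zero, eulerY hy, ExOp_nsmul, eulerX hx,
    smul_smul, ← add_smul]

lemma key_identity {P : R} {p q : ℕ} (hx : IsWeightedHomogeneous wX P p)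
    (hy : IsWeightedHomogeneous wY P q) (h0 : eop P = 0) :
    (2 * (q * p + q)) • P = ∑ β : J, ∑ γ : J, ubr β γ * Wop β γ P := by
  rw [sum_ubr_Wop, Om_eq hx hy h0, smul_smul]


lemma pderiv1_eq_zero_of_wY0 {P : R} (h : IsWeightedHomogeneous wY P 0) (γ : J) :
    pderiv (γ, (1:Fin 2)) P = 0 := by
  apply pderiv_eq_zero_of_notMem_vars
  intro hv
  obtain ⟨d, hd, hdi⟩ := (mem_vars _).mp hv
  have h0 : Finsupp.weight wY d = 0 := h (mem_support_iff.mp hd)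
  have hle := Finsupp.le_weight wY (s := ((γ, (1:Fin 2)) : J × Fin 2)) (by simp [wY]) d
  rw [h0, Nat.le_zero] at hle
  exact (Finsupp.mem_support_iff.mp hdi) hle

lemma eop_of_wY0 {P : R} (h : IsWeightedHomogeneous wY P 0) : eop P = 0 := by
  rw [eop]
  exact Finset.sum_eq_zero fun γ _ => by rw [pderiv1_eq_zero_of_wY0 h γ, mul_zero]

lemma X0_wY (γ : J) : IsWeightedHomogeneous wY (X (γ, (0:Fin 2)) : R) 0 := by
  simpa [wY] using isWeightedHomogeneous_X K wY ((γ, (0:Fin 2)) : J × Fin 2)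

lemma X0_wX (γ : J) : IsWeightedHomogeneous wX (X (γ, (0:Fin 2)) : R) 1 := by
  simpa [wX] using isWeightedHomogeneous_X K wX ((γ, (0:Fin 2)) : J × Fin 2)

lemma eop_wY {P : R} {q : ℕ} (h : IsWeightedHomogeneous wY P (q + 1)) :
    IsWeightedHomogeneous wY (eop P) q := by
  rw [eop]
  apply IsWeightedHomogeneous.sum
  intro γ _
  have h1 : IsWeightedHomogeneous wY (pderiv (γ, (1:Fin 2)) P) q := by
    simpa using pderiv1_wY h γ
  simpa using (X0_wY γ).mul h1

lemma eop_wX {P : R} {p : ℕ} (h : IsWeightedHomogeneous wX P p) :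
    IsWeightedHomogeneous wX (eop P) (p + 1) := by
  rw [eop]
  apply IsWeightedHomogeneous.sum
  intro γ _
  have h1 : IsWeightedHomogeneous wX (pderiv (γ, (1:Fin 2)) P) p := pderiv1_wX h γ
  have := (X0_wX γ).mul h1
  rwa [Nat.add_comm] at this

lemma decomp (w : J × Fin 2 → ℕ) (F : R) :
    F = ∑ m ∈ (weightedHomogeneousComponent_finsupp (w := w) F).toFinset,
      weightedHomogeneousComponent w m F := by
  conv_lhs => rw [← sum_weightedHomogeneousComponent w F]
  rw [finsum_eq_sum _ (weightedHomogeneousComponent_finsupp F)]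

lemma comp_wY_ker {F : R} (hF : eop F = 0) (n : ℕ) :
    eop (weightedHomogeneousComponent wY n F) = 0 := by
  classical
  set S := (weightedHomogeneousComponent_finsupp (w := wY) F).toFinset with hSdef
  have hsum : F = ∑ m ∈ S, weightedHomogeneousComponent wY m F := decomp wY F
  have hzero : (0 : R) = ∑ m ∈ S, eder (weightedHomogeneousComponent wY m F) := by
    rw [← map_sum, ← hsum, ← eop_eq_eder, hF]
  -- handle n = 0 separately
  cases n with
  | zero => exact eop_of_wY0 (weightedHomogeneousComponent_isWeightedHomogeneous 0 F)
  | succ k =>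
    by_cases hn : (k + 1) ∈ S
    · have hext := congrArg (weightedHomogeneousComponent wY k) hzero
      rw [map_zero, map_sum] at hext
      rw [Finset.sum_eq_single (k+1)] at hext
      · have hh : IsWeightedHomogeneous wY
            (eder ((weightedHomogeneousComponent wY (k+1)) F)) k := by
          rw [← eop_eq_eder]
          exact eop_wY (weightedHomogeneousComponent_isWeightedHomogeneous (k+1) F)
        rw [eop_eq_eder, ← hh.weightedHomogeneousComponent_same]
        exact hext.symm
      · intro m _ hm
        cases m with
        | zero =>
          rw [← eop_eq_eder, eop_of_wY0 (weightedHomogeneousComponent_isWeightedHomogeneous 0 F),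
            map_zero]
        | succ j =>
          rw [← eop_eq_eder]
          exact (eop_wY (weightedHomogeneousComponent_isWeightedHomogeneous (j+1) F)).weightedHomogeneousComponent_ne _
            (by omega)
      · intro hns
        exact absurd hn hns
    · have : weightedHomogeneousComponent wY (k+1) F = 0 := by
        by_contra hne
        exact hn ((Set.Finite.mem_toFinset _).mpr hne)
      rw [this, eop_eq_eder, map_zero]

lemma comp_wX_wY {P : R} {q : ℕ} (h : IsWeightedHomogeneous wY P q) (p : ℕ) :
    IsWeightedHomogeneous wY (weightedHomogeneousComponent wX p P) q := by
  classical
  intro d hd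
  rw [coeff_weightedHomogeneousComponent] at hd
  split_ifs at hd
  · exact h hd
  · exact absurd rfl hd

lemma comp_wX_ker {P : R} (hP : eop P = 0) (p : ℕ) :
    eop (weightedHomogeneousComponent wX p P) = 0 := by
  classical
  set S := (weightedHomogeneousComponent_finsupp (w := wX) P).toFinset with hSdef
  have hsum : P = ∑ m ∈ S, weightedHomogeneousComponent wX m P := decomp wX P
  have hzero : (0 : R) = ∑ m ∈ S, eder (weightedHomogeneousComponent wX m P) := by
    rw [← map_sum, ← hsum, ← eop_eq_eder, hP]
  by_cases hp : p ∈ S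
  · have hext := congrArg (weightedHomogeneousComponent wX (p+1)) hzero
    rw [map_zero, map_sum] at hext
    rw [Finset.sum_eq_single p] at hext
    · have hh : IsWeightedHomogeneous wX
          (eder ((weightedHomogeneousComponent wX p) P)) (p+1) := by
        rw [← eop_eq_eder]
        exact eop_wX (weightedHomogeneousComponent_isWeightedHomogeneous p P)
      rw [eop_eq_eder, ← hh.weightedHomogeneousComponent_same]
      exact hext.symm
    · intro m _ hm
      rw [← eop_eq_eder]
      exact (eop_wX (weightedHomogeneousComponent_isWeightedHomogeneous m P)).weightedHomogeneousComponent_ne _ (by omega)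
    · intro hns
      exact absurd hp hns
  · have : weightedHomogeneousComponent wX p P = 0 := by
      by_contra hne
      exact hp ((Set.Finite.mem_toFinset _).mpr hne)
    rw [this, eop_eq_eder, map_zero]


variable (K J) in
def gens : Set (MvPolynomial (J × Fin 2) K) :=
  {P | ∃ γ : J, P = X (γ, 0)} ∪
  {P | ∃ (α β : J), α ≠ β ∧ ∃ m : J → ℕ,
     P = (X (α, 0) * X (β, 1) - X (α, 1) * X (β, 0)) *
       pderiv (α, (0 : Fin 2)) (pderiv (β, (0 : Fin 2)) (∏ γ : J, X (γ, 0) ^ m γ))}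

variable (J) in
def xset : Set (J × Fin 2) := {i | i.2 = 0}

lemma prod_indicator (β γ : J) :
    (∏ δ : J, (X (δ, (0:Fin 2)) : R) ^ ((if δ = β then 1 else 0) + (if δ = γ then 1 else 0)))
      = X (β, (0:Fin 2)) * X (γ, (0:Fin 2)) := by
  have h1 : ∀ b : J, (∏ δ : J, (X (δ, (0:Fin 2)) : R) ^ (if δ = b then 1 else 0))
      = X (b, (0:Fin 2)) := by
    intro b
    rw [Finset.prod_congr rfl (fun δ _ => ?_) , Finset.prod_ite_eq' univ b
      (fun δ => (X (δ, (0:Fin 2)) : R)), if_pos (mem_univ b)]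
    rw [pow_ite, pow_one, pow_zero]
  calc (∏ δ : J, (X (δ, (0:Fin 2)) : R) ^ ((if δ = β then 1 else 0) + (if δ = γ then 1 else 0)))
      = (∏ δ : J, (X (δ, (0:Fin 2)) : R) ^ (if δ = β then 1 else 0))
        * ∏ δ : J, (X (δ, (0:Fin 2)) : R) ^ (if δ = γ then 1 else 0) := by
        rw [← Finset.prod_mul_distrib]
        exact Finset.prod_congr rfl fun δ _ => pow_add _ _ _
    _ = X (β, (0:Fin 2)) * X (γ, (0:Fin 2)) := by rw [h1, h1]

lemma conv_simple (β γ : J) (hne : β ≠ γ) :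
    pderiv (β, (0:Fin 2)) (pderiv (γ, (0:Fin 2))
      ((X (β, (0:Fin 2)) : R) * X (γ, (0:Fin 2)))) = 1 := by
  rw [pderiv_mul, pdX_00, pdX_00, if_neg (Ne.symm hne), if_pos rfl, zero_mul, mul_one, zero_add,
    pdX_00, if_pos rfl]

lemma ubr_mem (β γ : J) (hne : β ≠ γ) : ubr β γ ∈ Algebra.adjoin K (gens K J) := by
  apply Algebra.subset_adjoin
  refine Or.inr ⟨β, γ, hne, fun δ => (if δ = β then 1 else 0) + (if δ = γ then 1 else 0), ?_⟩
  rw [prod_indicator β γ, conv_simple β γ hne, mul_one, ubr]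
  ring

lemma X0_mem (γ : J) : (X (γ, (0:Fin 2)) : R) ∈ Algebra.adjoin K (gens K J) :=
  Algebra.subset_adjoin (Or.inl ⟨γ, rfl⟩)

lemma supported_pderiv {P : R} (h : P ∈ supported K (xset J)) (i : J × Fin 2) :
    pderiv i P ∈ supported K (xset J) := by
  rw [supported_eq_adjoin_X] at h
  induction h using Algebra.adjoin_induction with
  | mem x hx =>
      obtain ⟨j, _, rfl⟩ := hx
      rcases eq_or_ne j i with rfl | hne
      · rw [pderiv_X_self]; exact one_mem _
      · rw [pderiv_X_of_ne hne]; exact zero_mem _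
  | algebraMap r =>
      rw [MvPolynomial.algebraMap_eq, pderiv_C]; exact zero_mem _
  | add x y hx hy ihx ihy => rw [map_add]; exact add_mem ihx ihy
  | mul x y hx hy ihx ihy =>
      rw [pderiv_mul]
      rw [← supported_eq_adjoin_X] at hx hy
      exact add_mem (mul_mem ihx hy) (mul_mem hx ihy)

lemma eder_supported {P : R} (h : P ∈ supported K (xset J)) : eder P = 0 := by
  rw [eder_apply]
  refine Finset.sum_eq_zero fun γ _ => ?_
  rw [pderiv_eq_zero_of_notMem_vars, mul_zero]
  intro hv
  have := (mem_supported.mp h) hv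
  simp [xset] at this

lemma prod_mem_supported (m : J → ℕ) :
    (∏ γ : J, (X (γ, (0:Fin 2)) : R) ^ m γ) ∈ supported K (xset J) := by
  refine Subalgebra.prod_mem _ fun γ _ => pow_mem ?_ _
  rw [supported_eq_adjoin_X]
  exact Algebra.subset_adjoin ⟨(γ, 0), rfl, rfl⟩

lemma eder_X0 (γ : J) : eder (X (γ, (0:Fin 2)) : R) = 0 := by
  rw [eder_apply]
  exact Finset.sum_eq_zero fun δ _ => by rw [pdX_10, mul_zero]

lemma eder_X1 (γ : J) : eder (X (γ, (1:Fin 2)) : R) = X (γ, (0:Fin 2)) := by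
  rw [eder_apply]
  simp only [pdX_11, mul_ite, mul_one, mul_zero]
  rw [Finset.sum_ite_eq' univ γ (fun δ => (X (δ, (0:Fin 2)) : R)), if_pos (mem_univ γ)]

lemma eder_br (α β : J) :
    eder ((X (α, (0:Fin 2)) : R) * X (β, (1:Fin 2)) - X (α, (1:Fin 2)) * X (β, (0:Fin 2))) = 0 := by
  rw [map_sub, Derivation.leibniz, Derivation.leibniz, eder_X0, eder_X0, eder_X1, eder_X1]
  simp only [smul_eq_mul, smul_zero, mul_zero, zero_add, add_zero]
  ring

variable (K J) in
def kerSub : Subalgebra K (MvPolynomial (J × Fin 2) K) where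
  carrier := {F | eder F = 0}
  add_mem' := by
    intro a b ha hb
    simp only [Set.mem_setOf_eq] at *
    rw [map_add, ha, hb, add_zero]
  mul_mem' := by
    intro a b ha hb
    simp only [Set.mem_setOf_eq] at *
    rw [Derivation.leibniz, ha, hb, smul_zero, smul_zero, add_zero]
  algebraMap_mem' := fun r => Derivation.map_algebraMap eder r

lemma gens_subset_ker : gens K J ⊆ (kerSub K J : Set (MvPolynomial (J × Fin 2) K)) := by
  rintro P (⟨γ, rfl⟩ | ⟨α, β, hne, m, rfl⟩)
  · exact eder_X0 γ
  · show eder _ = 0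
    rw [Derivation.leibniz, eder_br]
    have hQ : eder (pderiv (α, (0:Fin 2)) (pderiv (β, (0:Fin 2))
        (∏ γ : J, (X (γ, (0:Fin 2)) : R) ^ m γ))) = 0 :=
      eder_supported (supported_pderiv (supported_pderiv (prod_mem_supported m) _) _)
    rw [hQ]
    simp

lemma main_ind : ∀ (q p : ℕ) (v : R), IsWeightedHomogeneous wX v p →
    IsWeightedHomogeneous wY v q → eop v = 0 → v ∈ Algebra.adjoin K (gens K J) := by
  intro q
  induction q with
  | zero =>
    intro p v _ hy _
    have hvars : ↑v.vars ⊆ xset J := by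
      intro i hi
      obtain ⟨d, hd, hdi⟩ := (mem_vars i).mp hi
      by_contra hi2
      have hwyi : wY i ≠ 0 := by
        simp only [xset, Set.mem_setOf_eq] at hi2
        simp [wY, hi2]
      have hle := Finsupp.le_weight wY hwyi d
      rw [hy (mem_support_iff.mp hd), Nat.le_zero] at hle
      exact (Finsupp.mem_support_iff.mp hdi) hle
    have hv : v ∈ supported K (xset J) := mem_supported.mpr hvars
    rw [supported_eq_adjoin_X] at hv
    refine Algebra.adjoin_mono ?_ hv
    rintro t ⟨⟨j1, j2⟩, hj, rfl⟩
    simp only [xset, Set.mem_setOf_eq] at hj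
    subst hj
    exact Or.inl ⟨j1, rfl⟩
  | succ q ih =>
    intro p v hx hy h0
    have hW : ∀ β γ' : J, Wop β γ' v ∈ Algebra.adjoin K (gens K J) := by
      intro β γ'
      refine ih (p - 1) (Wop β γ' v) (Wop_wX hx β γ') ?_ ?_
      · simpa using Wop_wY hy β γ'
      · rw [eop_Wop, h0, Wop_zero]
    have hkey := key_identity hx hy h0
    have hc0 : ((2 * ((q+1) * p + (q+1)) : ℕ) : K) ≠ 0 := by
      refine Nat.cast_ne_zero.mpr ?_
      have : 0 < (q+1) * p + (q+1) := Nat.lt_of_lt_of_le (Nat.succ_pos q) (Nat.le_add_left _ _)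
      omega
    have hv : v = ((2 * ((q+1) * p + (q+1)) : ℕ) : K)⁻¹
        • (((2 * ((q+1) * p + (q+1)) : ℕ) : K) • v) := (inv_smul_smul₀ hc0 v).symm
    rw [hv]
    apply Subalgebra.smul_mem
    have hcast : ((2 * ((q+1) * p + (q+1)) : ℕ) : K) • v
        = ∑ β : J, ∑ γ' : J, ubr β γ' * Wop β γ' v := by
      rw [Nat.cast_smul_eq_nsmul]
      exact hkey
    rw [hcast]
    refine Subalgebra.sum_mem _ fun β _ => Subalgebra.sum_mem _ fun γ' _ => ?_
    rcases eq_or_ne β γ' with rfl | hne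
    · rw [ubr, sub_self, zero_mul]
      exact zero_mem _
    · exact mul_mem (ubr_mem β γ' hne) (hW β γ')

lemma ker_mem_adjoin {F : R} (hF : eop F = 0) : F ∈ Algebra.adjoin K (gens K J) := by
  rw [decomp wY F]
  refine Subalgebra.sum_mem _ fun m _ => ?_
  have hFm_ker : eop (weightedHomogeneousComponent wY m F) = 0 := comp_wY_ker hF m
  have hFm_wY : IsWeightedHomogeneous wY (weightedHomogeneousComponent wY m F) m :=
    weightedHomogeneousComponent_isWeightedHomogeneous m F
  rw [decomp wX (weightedHomogeneousComponent wY m F)]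
  refine Subalgebra.sum_mem _ fun p _ => ?_
  exact main_ind m p _
    (weightedHomogeneousComponent_isWeightedHomogeneous p _)
    (comp_wX_wY hFm_wY p)
    (comp_wX_ker hFm_ker p)


end Ops


end
end Stmt7

open MvPolynomial

/-- with `Conv_{α,β}(P) = [α,β] · ∂²P/(∂α₀∂β₀)`, the kernel of the derivation
`D` of `R_J` (`D(α₀) = 0`, `D(α₁) = α₀`) equals the `K`-subalgebra generated by the
variables `γ₀` together with all convolutions `Conv_{α,β}(M)` of monomials `M` in the
variables `{γ₀ : γ ∈ J}`. -/
theorem stmt_7 (K : Type*) [Field K] [CharZero K] (J : Type*) [Fintype J]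
    (D : Derivation K (MvPolynomial (J × Fin 2) K) (MvPolynomial (J × Fin 2) K))
    (hD : D = MvPolynomial.mkDerivation K
      (fun v : J × Fin 2 => if v.2 = 0 then 0 else X (v.1, 0))) :
    {F : MvPolynomial (J × Fin 2) K | D F = 0} =
      (Algebra.adjoin K
        ({P | ∃ γ : J, P = X (γ, 0)} ∪
         {P | ∃ (α β : J), α ≠ β ∧ ∃ m : J → ℕ,
            P = (X (α, 0) * X (β, 1) - X (α, 1) * X (β, 0)) *
              pderiv (α, (0 : Fin 2)) (pderiv (β, (0 : Fin 2)) (∏ γ : J, X (γ, 0) ^ m γ))} :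
          Set (MvPolynomial (J × Fin 2) K)) :
        Set (MvPolynomial (J × Fin 2) K)) := by
  classical
  have hDe : D = Stmt7.eder := Stmt7.D_eq_eder D hD
  ext F
  simp only [Set.mem_setOf_eq, SetLike.mem_coe]
  constructor
  · intro h0
    have he : Stmt7.eop F = 0 := by rw [Stmt7.eop_eq_eder, ← hDe, h0]
    exact Stmt7.ker_mem_adjoin he
  · intro hA
    have hle : Algebra.adjoin K (Stmt7.gens K J) ≤ Stmt7.kerSub K J :=
      Algebra.adjoin_le Stmt7.gens_subset_ker
    have hm : Stmt7.eder F = 0 := hle hA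
    rw [hDe]
    exact hm
end

section
/- Let K be a field of characteristic 0 and d = (d₁,…,d_s) a tuple of positive integers. Let F, G ∈ ker D_d be nonzero E-eigenvectors with E(F) = p·F and E(G) = q·G (so ord F = p and ord G = q), and let 0 ≤ r ≤ min(p,q). If the semi-transvectant [F,G]^r is nonzero, then ord([F,G]^r) = p + q − 2r. -/
open MvPolynomial

/-- The order of a semi-invariant: the least `k` with `D*^{k+1}(S) = 0`. -/
noncomputable def ordFn {K : Type*} [Field K] {σ : Type*}
    (Dstar : Derivation K (MvPolynomial σ K) (MvPolynomial σ K))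
    (S : MvPolynomial σ K) : ℕ :=
  sInf {k : ℕ | (Dstar.toLinearMap ^ (k + 1)) S = 0}

/-- The `r`-th semi-transvectant
`[F,G]^r = Σ_{i=0}^r (−1)^i C(r,i) (D*^i F)/[p]_i · (D*^{r−i} G)/[q]_{r−i}`,
where `[m]_i` is the falling factorial. -/
noncomputable def transv {K : Type*} [Field K] {σ : Type*}
    (Dstar : Derivation K (MvPolynomial σ K) (MvPolynomial σ K))
    (p q r : ℕ) (F G : MvPolynomial σ K) : MvPolynomial σ K :=
  ∑ i ∈ Finset.range (r + 1),
    ((-1 : K) ^ i * (r.choose i : K) * ((p.descFactorial i : K))⁻¹ *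
        ((q.descFactorial (r - i) : K))⁻¹) •
      ((Dstar.toLinearMap ^ i) F * (Dstar.toLinearMap ^ (r - i)) G)

section AuxSl2

variable {R : Type*} [Field R] [CharZero R]

lemma sl2_h_pow {V : Type*} [AddCommGroup V] [Module R V]
    {f h : V →ₗ[R] V} (hhf : ∀ v, h (f v) = f (h v) - (2:R) • f v)
    {c : R} {v : V} (hv : h v = c • v) (k : ℕ) :
    h ((f^k) v) = (c - 2*k) • (f^k) v := by
  induction k with
  | zero => simpa using hv
  | succ k ih =>
    have hfk : (f^(k+1)) v = f ((f^k) v) := by rw [pow_succ']; rfl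
    rw [hfk, hhf, ih, map_smul]
    rw [show f ((f^k) v) = (f^(k+1)) v from (by rw [pow_succ']; rfl)]
    rw [← sub_smul]
    congr 1
    push_cast
    ring

lemma sl2_e_pow {V : Type*} [AddCommGroup V] [Module R V] {e f h : V →ₗ[R] V}
    (hef : ∀ v, e (f v) = f (e v) + h v)
    (hhf : ∀ v, h (f v) = f (h v) - (2:R) • f v)
    {c : R} {v : V} (h0 : e v = 0) (hv : h v = c • v) (k : ℕ) :
    e ((f^(k+1)) v) = (((k:R)+1) * (c - k)) • (f^k) v := by
  induction k with
  | zero =>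
    have h1 : (f^1) v = f v := by simp
    rw [h1, hef, h0, map_zero, zero_add, hv]
    simp
  | succ k ih =>
    have hfk : (f^(k+2)) v = f ((f^(k+1)) v) := by rw [pow_succ']; rfl
    rw [hfk, hef, ih, map_smul, sl2_h_pow hhf hv (k+1)]
    rw [show f ((f^k) v) = (f^(k+1)) v from (by rw [pow_succ']; rfl)]
    rw [← add_smul]
    congr 1
    push_cast
    ring

lemma sl2_pow_ne_zero {V : Type*} [AddCommGroup V] [Module R V] {e f h : V →ₗ[R] V}
    (hef : ∀ v, e (f v) = f (e v) + h v)
    (hhf : ∀ v, h (f v) = f (h v) - (2:R) • f v)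
    {c : R} {v : V} (h0 : e v = 0) (hv : h v = c • v) (hne : v ≠ 0) (N : ℕ)
    (hN : ∀ k < N, ((k:R)+1) * (c - k) ≠ 0) : (f^N) v ≠ 0 := by
  induction N with
  | zero => simpa using hne
  | succ N ih =>
    intro hz
    have h1 := sl2_e_pow hef hhf h0 hv N
    rw [hz, map_zero] at h1
    have h2 : (f^N) v = 0 := by
      have := hN N (Nat.lt_succ_self N)
      exact (smul_eq_zero.mp h1.symm).resolve_left this
    exact ih (fun k hk => hN k (hk.trans (Nat.lt_succ_self N))) h2

variable {σ : Type*}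

lemma totalDegree_deriv_le' {R : Type*} [CommRing R]
    (g : σ → MvPolynomial σ R) (hg : ∀ v, (g v).totalDegree ≤ 1)
    (Q : MvPolynomial σ R) :
    ((MvPolynomial.mkDerivation R g) Q).totalDegree ≤ Q.totalDegree := by
  conv_lhs => rw [Q.as_sum]
  rw [map_sum]
  refine (totalDegree_finset_sum _ _).trans ?_
  refine Finset.sup_le fun m hm => ?_
  refine le_trans ?_ (le_totalDegree hm)
  rw [mkDerivation_monomial]
  refine (totalDegree_smul_le _ _).trans ?_
  rw [Finsupp.sum]
  refine (totalDegree_finset_sum _ _).trans ?_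
  refine Finset.sup_le fun i hi => ?_
  have hmi : m i ≠ 0 := Finsupp.mem_support_iff.mp hi
  have hle : Finsupp.single i 1 ≤ m := by
    rw [Finsupp.single_le_iff]; omega
  have hsum : ((m - Finsupp.single i 1).sum fun _ n => n) + 1 = m.sum fun _ n => n := by
    have h' : (m - Finsupp.single i 1) + Finsupp.single i 1 = m := tsub_add_cancel_of_le hle
    conv_rhs => rw [← h']
    rw [Finsupp.sum_add_index' (fun _ => rfl) (fun _ _ _ => rfl)]
    simp
  have hterm : ((monomial (m - Finsupp.single i 1) ((m i : R))) • g i).totalDegree ≤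
      ((m - Finsupp.single i 1).sum fun _ n => n) + 1 := by
    rw [smul_eq_mul]
    refine (totalDegree_mul _ _).trans ?_
    exact add_le_add (totalDegree_monomial_le _ _) (hg i)
  exact hterm.trans (le_of_eq hsum)

lemma exists_pow_deriv_eq_zero [Finite σ]
    {f h : MvPolynomial σ R →ₗ[R] MvPolynomial σ R}
    (hdeg : ∀ Q, (f Q).totalDegree ≤ Q.totalDegree)
    (hhf : ∀ v, h (f v) = f (h v) - (2:R) • f v)
    {c : R} {v : MvPolynomial σ R} (hv : h v = c • v) :
    ∃ k, (f^k) v = 0 := by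
  by_contra hcon
  push_neg at hcon
  set N := v.totalDegree with hN
  have hdegk : ∀ k, ((f^k) v).totalDegree ≤ N := by
    intro k
    induction k with
    | zero => simp [hN]
    | succ k ih =>
      have : (f^(k+1)) v = f ((f^k) v) := by rw [pow_succ']; rfl
      rw [this]
      exact (hdeg _).trans ih
  have heig : ∀ k : ℕ, Module.End.HasEigenvector h (c - 2*k) ((f^k) v) :=
    fun k => ⟨Module.End.mem_eigenspace_iff.mpr (sl2_h_pow hhf hv k), hcon k⟩
  have hinj : Function.Injective (fun k : ℕ => c - 2*(k:R)) := by
    intro a b hab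
    simp only [sub_right_inj] at hab
    field_simp at hab
    exact_mod_cast hab
  have hli := Module.End.eigenvectors_linearIndependent' h _ hinj _ heig
  set W := restrictTotalDegree σ R N with hW
  have hmem : ∀ k, (f^k) v ∈ W := fun k => (mem_restrictTotalDegree _ _ _).mpr (hdegk k)
  have hli2 : LinearIndependent R (fun k : ℕ => (⟨(f^k) v, hmem k⟩ : W)) := by
    apply LinearIndependent.of_comp W.subtype
    exact hli
  exact Module.Finite.not_linearIndependent_of_infinite _ hli2

lemma ordFn_of_eigen [Finite σ]
    (Dstar : Derivation R (MvPolynomial σ R) (MvPolynomial σ R))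
    {e h : MvPolynomial σ R →ₗ[R] MvPolynomial σ R}
    (hef : ∀ P, e (Dstar.toLinearMap P) = Dstar.toLinearMap (e P) + h P)
    (hhf : ∀ P, h (Dstar.toLinearMap P) = Dstar.toLinearMap (h P) - (2:R) • Dstar.toLinearMap P)
    (hdeg : ∀ Q, (Dstar.toLinearMap Q).totalDegree ≤ Q.totalDegree)
    {m : ℕ} {v : MvPolynomial σ R} (hv0 : v ≠ 0) (he : e v = 0) (hh : h v = (m:R) • v) :
    ordFn Dstar v = m := by
  set f := Dstar.toLinearMap with hf
  have hup : (f^(m+1)) v = 0 := by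
    by_contra hu
    set u := (f^(m+1)) v with husp
    have heu : e u = 0 := by
      have := sl2_e_pow hef hhf he hh m
      rw [husp, this]
      simp
    have hhu : h u = ((m:R) - 2*(m+1)) • u := by
      rw [husp]
      exact_mod_cast sl2_h_pow hhf hh (m+1)
    have hall : ∀ N, (f^N) u ≠ 0 := by
      intro N
      refine sl2_pow_ne_zero hef hhf heu hhu hu N (fun k _ => ?_)
      have h2 : ((m:R) - 2*(m+1)) - k = -(((m+2+k : ℕ) : R)) := by push_cast; ring
      rw [h2]
      refine mul_ne_zero (Nat.cast_add_one_ne_zero _) ?_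
      simp only [ne_eq, neg_eq_zero, Nat.cast_eq_zero]
      omega
    obtain ⟨N, hNz⟩ := exists_pow_deriv_eq_zero hdeg hhf hhu
    exact hall N hNz
  have hlow : ∀ k, k < m → (f^(k+1)) v ≠ 0 := by
    intro k hk
    refine sl2_pow_ne_zero hef hhf he hh hv0 (k+1) (fun j hj => ?_)
    have h2 : (m:R) - j = ((m - j : ℕ) : R) := by
      rw [Nat.cast_sub (by omega)]
    rw [h2]
    refine mul_ne_zero (Nat.cast_add_one_ne_zero _) ?_
    simp only [ne_eq, Nat.cast_eq_zero]
    omega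
  have hmem : m ∈ {k : ℕ | (f ^ (k + 1)) v = 0} := hup
  refine le_antisymm (Nat.sInf_le hmem) (le_csInf ⟨m, hmem⟩ fun k hk => ?_)
  by_contra hlt
  push_neg at hlt
  exact hlow k hlt hk

lemma transv_eigen
    (Dstar E : Derivation R (MvPolynomial σ R) (MvPolynomial σ R))
    (hhf : ∀ P, E (Dstar P) = Dstar (E P) - (2:R) • Dstar P)
    {F G : MvPolynomial σ R} {p q : ℕ}
    (hEF : E F = (p:R) • F) (hEG : E G = (q:R) • G)
    {r : ℕ} :
    E (transv Dstar p q r F G) = ((p:R) + q - 2*r) • transv Dstar p q r F G := by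
  unfold transv
  rw [map_sum, Finset.smul_sum]
  refine Finset.sum_congr rfl fun i hi => ?_
  rw [Finset.mem_range] at hi
  have hi' : i ≤ r := by omega
  rw [Derivation.map_smul, smul_comm]
  congr 1
  rw [Derivation.leibniz]
  have hA : E ((Dstar.toLinearMap ^ i) F) = ((p:R) - 2*i) • (Dstar.toLinearMap ^ i) F :=
    sl2_h_pow (h := E.toLinearMap) (fun P => hhf P) hEF i
  have hB : E ((Dstar.toLinearMap ^ (r-i)) G)
      = ((q:R) - 2*(r-i : ℕ)) • (Dstar.toLinearMap ^ (r-i)) G :=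
    sl2_h_pow (h := E.toLinearMap) (fun P => hhf P) hEG (r-i)
  rw [hA, hB]
  simp only [smul_eq_mul, MvPolynomial.smul_eq_C_mul, Nat.cast_sub hi', map_sub, map_add,
    map_mul, map_natCast, map_ofNat, map_one]
  ring

lemma coeff_cancel {p q r i : ℕ} (hi : i < r) (hrp : r ≤ p) (hrq : r ≤ q) :
    ((-1:R)^(i+1) * (r.choose (i+1) : R) * ((p.descFactorial (i+1) : R))⁻¹ *
        ((q.descFactorial (r-(i+1)) : R))⁻¹) * (((i:R)+1) * ((p:R) - i))
    + ((-1:R)^i * (r.choose i : R) * ((p.descFactorial i : R))⁻¹ *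
        ((q.descFactorial (r-i) : R))⁻¹) *
      ((((r-(i+1) : ℕ) : R)+1) * ((q:R) - ((r-(i+1) : ℕ) : R))) = 0 := by
  have dp1 : (p.descFactorial (i+1) : R) = ((p:R) - i) * (p.descFactorial i : R) := by
    rw [Nat.descFactorial_succ]
    push_cast [Nat.cast_sub (by omega : i ≤ p)]
    ring
  have dq1 : (q.descFactorial (r-i) : R)
      = ((q:R) - ((r-(i+1):ℕ) : R)) * (q.descFactorial (r-(i+1)) : R) := by
    rw [show r - i = (r-(i+1)) + 1 by omega, Nat.descFactorial_succ]
    push_cast [Nat.cast_sub (by omega : r-(i+1) ≤ q)]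
    ring
  have hch : ((r.choose (i+1)) : R) * ((i:R)+1) = (r.choose i : R) * (((r-(i+1) : ℕ):R)+1) := by
    have := Nat.choose_succ_right_eq r i
    have h2 : ((r.choose (i+1) * (i+1) : ℕ) : R) = ((r.choose i * (r-i) : ℕ) : R) := by
      exact_mod_cast congrArg (Nat.cast : ℕ → R) this
    push_cast [show r - i = (r-(i+1)) + 1 by omega] at h2
    exact h2
  have hpne : ((p:R) - i) ≠ 0 := by
    refine sub_ne_zero.mpr ?_
    exact_mod_cast (by omega : p ≠ i)
  have hqne : ((q:R) - ((r-(i+1):ℕ):R)) ≠ 0 := by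
    refine sub_ne_zero.mpr ?_
    exact_mod_cast (by omega : q ≠ r - (i+1))
  have hx : ((p:R) - i) * ((p:R) - i)⁻¹ = 1 := mul_inv_cancel₀ hpne
  have hy : ((q:R) - ((r-(i+1):ℕ):R)) * ((q:R) - ((r-(i+1):ℕ):R))⁻¹ = 1 := mul_inv_cancel₀ hqne
  rw [dp1, dq1, mul_inv, mul_inv, pow_succ]
  linear_combination (-((-1:R)^i) * (r.choose (i+1) : R) * ((i:R)+1) * ((p.descFactorial i : R))⁻¹ * ((q.descFactorial (r-(i+1)) : R))⁻¹) * hx + (((-1:R)^i) * (r.choose i : R) * ((((r-(i+1):ℕ)):R)+1) * ((p.descFactorial i : R))⁻¹ * ((q.descFactorial (r-(i+1)) : R))⁻¹) * hy + (-(((-1:R)^i) * ((p.descFactorial i : R))⁻¹ * ((q.descFactorial (r-(i+1)) : R))⁻¹)) * hch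

lemma transv_ker
    (Dd Dstar E : Derivation R (MvPolynomial σ R) (MvPolynomial σ R))
    (hef : ∀ P, Dd (Dstar P) = Dstar (Dd P) + E P)
    (hhf : ∀ P, E (Dstar P) = Dstar (E P) - (2:R) • Dstar P)
    {F G : MvPolynomial σ R} {p q : ℕ}
    (hF : Dd F = 0) (hG : Dd G = 0)
    (hEF : E F = (p:R) • F) (hEG : E G = (q:R) • G)
    {r : ℕ} (hrp : r ≤ p) (hrq : r ≤ q) :
    Dd (transv Dstar p q r F G) = 0 := by
  set f := Dstar.toLinearMap with hfdef
  set A : ℕ → MvPolynomial σ R := fun i => (f^i) F with hA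
  set B : ℕ → MvPolynomial σ R := fun i => (f^i) G with hB
  set c : ℕ → R := fun i => (-1:R)^i * (r.choose i : R) * ((p.descFactorial i : R))⁻¹ *
    ((q.descFactorial (r-i) : R))⁻¹ with hc
  have keyA : ∀ i : ℕ, Dd (A (i+1)) = (((i:R)+1) * ((p:R) - i)) • A i :=
    fun i => sl2_e_pow (e := Dd.toLinearMap) (h := E.toLinearMap)
      (fun P => hef P) (fun P => hhf P) hF hEF i
  have keyB : ∀ i : ℕ, Dd (B (i+1)) = (((i:R)+1) * ((q:R) - i)) • B i :=
    fun i => sl2_e_pow (e := Dd.toLinearMap) (h := E.toLinearMap)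
      (fun P => hef P) (fun P => hhf P) hG hEG i
  have hA0 : A 0 = F := by simp [hA]
  have hB0 : B 0 = G := by simp [hB]
  have step : Dd (transv Dstar p q r F G) =
      ∑ i ∈ Finset.range (r+1),
        (c i • (Dd (A i) * B (r-i)) + c i • (A i * Dd (B (r-i)))) := by
    unfold transv
    rw [map_sum]
    refine Finset.sum_congr rfl fun i _ => ?_
    rw [Derivation.map_smul, Derivation.leibniz, smul_add]
    rw [smul_eq_mul, smul_eq_mul, mul_comm ((f^(r-i)) G)]
    rw [add_comm]
  rw [step, Finset.sum_add_distrib]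
  have h1 : ∑ i ∈ Finset.range (r+1), c i • (Dd (A i) * B (r-i))
      = ∑ i ∈ Finset.range r, c (i+1) • (Dd (A (i+1)) * B (r-(i+1))) := by
    rw [Finset.sum_range_succ']
    rw [hA0, hF]
    simp
  have h2 : ∑ i ∈ Finset.range (r+1), c i • (A i * Dd (B (r-i)))
      = ∑ i ∈ Finset.range r, c i • (A i * Dd (B (r-i))) := by
    rw [Finset.sum_range_succ]
    rw [Nat.sub_self, hB0, hG]
    simp
  rw [h1, h2, ← Finset.sum_add_distrib]
  refine Finset.sum_eq_zero fun i hi => ?_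
  rw [Finset.mem_range] at hi
  rw [keyA i]
  rw [show Dd (B (r-i)) = ((((r-(i+1):ℕ):R)+1) * ((q:R) - ((r-(i+1):ℕ):R))) • B (r-(i+1)) from by
    rw [show r - i = (r-(i+1)) + 1 by omega]; exact keyB (r-(i+1))]
  rw [smul_mul_assoc, mul_smul_comm, smul_smul, smul_smul, ← add_smul]
  rw [show c (i+1) * ((((i:R))+1) * ((p:R) - i))
      + c i * ((((r-(i+1):ℕ):R)+1) * ((q:R) - ((r-(i+1):ℕ):R))) = 0 from by
    have h3 := coeff_cancel (R := R) hi hrp hrq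
    simp only [hc]
    linear_combination h3]
  rw [zero_smul]

end AuxSl2

section Brackets

theorem bracket_ef (K : Type*) [Field K] [CharZero K] (s : ℕ)
    (d : Fin s → ℕ) (hd : ∀ j, 0 < d j)
    (Dd Dstar E : Derivation K (MvPolynomial (Σ j : Fin s, Fin (d j + 1)) K)
      (MvPolynomial (Σ j : Fin s, Fin (d j + 1)) K))
    (hDd : Dd = MvPolynomial.mkDerivation K
      (fun v : Σ j : Fin s, Fin (d j + 1) =>
        if h : (v.2 : ℕ) = 0 then 0
        else X (⟨v.1, ⟨(v.2 : ℕ) - 1, Nat.lt_of_le_of_lt (Nat.sub_le _ _) v.2.isLt⟩⟩ : Σ j : Fin s, Fin (d j + 1))))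
    (hDstar : Dstar = MvPolynomial.mkDerivation K
      (fun v : Σ j : Fin s, Fin (d j + 1) =>
        if h : (v.2 : ℕ) < d v.1
          then ((((v.2 : ℕ) + 1) * (d v.1 - (v.2 : ℕ)) : ℕ) :
                MvPolynomial (Σ j : Fin s, Fin (d j + 1)) K) *
            X (⟨v.1, ⟨(v.2 : ℕ) + 1, Nat.succ_lt_succ h⟩⟩ : Σ j : Fin s, Fin (d j + 1))
          else 0))
    (hE : E = MvPolynomial.mkDerivation K
      (fun v : Σ j : Fin s, Fin (d j + 1) =>
        ((d v.1 : K) - 2 * ((v.2 : ℕ) : K)) • X v)) :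
    ⁅Dd, Dstar⁆ = E := by
  subst hDd hDstar hE
  refine MvPolynomial.derivation_ext fun v => ?_
  obtain ⟨j, i⟩ := v
  rw [Derivation.commutator_apply]
  rw [mkDerivation_X, mkDerivation_X]
  rw [mkDerivation_X]
  dsimp only
  by_cases hlt : (i:ℕ) < d j
  · rw [dif_pos hlt, Derivation.leibniz, Derivation.map_natCast, smul_zero, add_zero,
      mkDerivation_X]
    dsimp only
    by_cases hz : (i:ℕ) = 0
    · rw [dif_pos hz, map_zero, sub_zero, dif_neg (Nat.succ_ne_zero _)]
      simp only [Nat.add_sub_cancel, Fin.eta, smul_eq_mul, MvPolynomial.smul_eq_C_mul]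
      congr 1
      rw [← MvPolynomial.C_eq_coe_nat, MvPolynomial.C_inj]
      push_cast [Nat.cast_sub hlt.le]
      rw [hz]
      push_cast
      ring
    · rw [dif_neg hz, dif_neg (Nat.succ_ne_zero _), mkDerivation_X]
      dsimp only
      rw [dif_pos (show (i:ℕ) - 1 < d j by omega)]
      obtain ⟨k, hk⟩ : ∃ k, d j = (i:ℕ) + k := ⟨d j - (i:ℕ), by omega⟩
      simp only [Nat.add_sub_cancel, show (i:ℕ)-1+1 = (i:ℕ) from by omega, Fin.eta,
        smul_eq_mul, MvPolynomial.smul_eq_C_mul]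
      rw [← sub_mul]
      congr 1
      rw [← MvPolynomial.C_eq_coe_nat, ← MvPolynomial.C_eq_coe_nat, ← map_sub,
        MvPolynomial.C_inj]
      rw [show d j - (i:ℕ) = k from by omega,
        show d j - ((i:ℕ) - 1) = k + 1 from by omega,
        show ((d j : ℕ) : K) = ((i:ℕ):K) + (k:K) from by
          exact_mod_cast congrArg (Nat.cast : ℕ → K) hk]
      push_cast
      ring
  · rw [dif_neg hlt, map_zero, zero_sub]
    have hz : (i : ℕ) ≠ 0 := by
      have := hd j; omega
    rw [dif_neg hz, mkDerivation_X]
    dsimp only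
    rw [dif_pos (show (i:ℕ) - 1 < d j by omega)]
    have hieq : (i:ℕ) = d j := by have := i.isLt; omega
    simp only [show (i:ℕ)-1+1 = (i:ℕ) from by omega, Fin.eta,
      smul_eq_mul, MvPolynomial.smul_eq_C_mul,
      show d j - ((i:ℕ) - 1) = 1 from by omega]
    rw [← neg_mul]
    congr 1
    rw [← MvPolynomial.C_eq_coe_nat, ← map_neg, MvPolynomial.C_inj,
      show ((d j : ℕ) : K) = ((i:ℕ):K) from by
        exact_mod_cast congrArg (Nat.cast : ℕ → K) hieq.symm]
    push_cast
    ring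

theorem bracket_hf (K : Type*) [Field K] [CharZero K] (s : ℕ)
    (d : Fin s → ℕ)
    (Dstar E : Derivation K (MvPolynomial (Σ j : Fin s, Fin (d j + 1)) K)
      (MvPolynomial (Σ j : Fin s, Fin (d j + 1)) K))
    (hDstar : Dstar = MvPolynomial.mkDerivation K
      (fun v : Σ j : Fin s, Fin (d j + 1) =>
        if h : (v.2 : ℕ) < d v.1
          then ((((v.2 : ℕ) + 1) * (d v.1 - (v.2 : ℕ)) : ℕ) :
                MvPolynomial (Σ j : Fin s, Fin (d j + 1)) K) *
            X (⟨v.1, ⟨(v.2 : ℕ) + 1, Nat.succ_lt_succ h⟩⟩ : Σ j : Fin s, Fin (d j + 1))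
          else 0))
    (hE : E = MvPolynomial.mkDerivation K
      (fun v : Σ j : Fin s, Fin (d j + 1) =>
        ((d v.1 : K) - 2 * ((v.2 : ℕ) : K)) • X v)) :
    ⁅E, Dstar⁆ = (-2 : K) • Dstar := by
  subst hDstar hE
  refine MvPolynomial.derivation_ext fun v => ?_
  obtain ⟨j, i⟩ := v
  rw [Derivation.commutator_apply, Derivation.smul_apply, mkDerivation_X, mkDerivation_X,
    Derivation.map_smul, mkDerivation_X]
  dsimp only
  by_cases hlt : (i:ℕ) < d j
  · rw [dif_pos hlt, Derivation.leibniz, Derivation.map_natCast, smul_zero, add_zero,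
      mkDerivation_X]
    dsimp only
    simp only [smul_eq_mul, MvPolynomial.smul_eq_C_mul, map_sub, map_mul, map_natCast, map_neg,
      map_ofNat, map_one]
    push_cast
    ring
  · rw [dif_neg hlt]
    simp [hlt]

end Brackets

/-- if `F, G ∈ ker D_d` are nonzero `E`-eigenvectors with eigenvalues `p, q`
(so `ord F = p`, `ord G = q`), `0 ≤ r ≤ min(p,q)`, and the semi-transvectant `[F,G]^r` is
nonzero, then `ord [F,G]^r = p + q − 2r`. -/
theorem stmt_10 (K : Type*) [Field K] [CharZero K] (s : ℕ) (hs : 0 < s)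
    (d : Fin s → ℕ) (hd : ∀ j, 0 < d j)
    (Dd Dstar E : Derivation K (MvPolynomial (Σ j : Fin s, Fin (d j + 1)) K)
      (MvPolynomial (Σ j : Fin s, Fin (d j + 1)) K))
    (hDd : Dd = MvPolynomial.mkDerivation K
      (fun v : Σ j : Fin s, Fin (d j + 1) =>
        if h : (v.2 : ℕ) = 0 then 0
        else X (⟨v.1, ⟨(v.2 : ℕ) - 1, by omega⟩⟩ : Σ j : Fin s, Fin (d j + 1))))
    (hDstar : Dstar = MvPolynomial.mkDerivation K
      (fun v : Σ j : Fin s, Fin (d j + 1) =>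
        if h : (v.2 : ℕ) < d v.1
          then ((((v.2 : ℕ) + 1) * (d v.1 - (v.2 : ℕ)) : ℕ) :
                MvPolynomial (Σ j : Fin s, Fin (d j + 1)) K) *
            X (⟨v.1, ⟨(v.2 : ℕ) + 1, by omega⟩⟩ : Σ j : Fin s, Fin (d j + 1))
          else 0))
    (hE : E = MvPolynomial.mkDerivation K
      (fun v : Σ j : Fin s, Fin (d j + 1) =>
        ((d v.1 : K) - 2 * ((v.2 : ℕ) : K)) • X v))
    (F G : MvPolynomial (Σ j : Fin s, Fin (d j + 1)) K)
    (hF0 : F ≠ 0) (hG0 : G ≠ 0) (hFker : Dd F = 0) (hGker : Dd G = 0)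
    (p q : ℕ) (hEF : E F = (p : K) • F) (hEG : E G = (q : K) • G)
    (r : ℕ) (hr : r ≤ min p q)
    (hne : transv Dstar p q r F G ≠ 0) :
    ordFn Dstar (transv Dstar p q r F G) = p + q - 2 * r := by
  have hb1 := bracket_ef K s d hd Dd Dstar E hDd hDstar hE
  have hb2 := bracket_hf K s d Dstar E hDstar hE
  have hef : ∀ P, Dd (Dstar P) = Dstar (Dd P) + E P := by
    intro P
    have h := congrArg (fun (D : Derivation K _ _) => D P) hb1
    simp only [Derivation.commutator_apply] at h
    linear_combination (norm := abel) h
  have hhf : ∀ P, E (Dstar P) = Dstar (E P) - (2:K) • Dstar P := by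
    intro P
    have h := congrArg (fun (D : Derivation K _ _) => D P) hb2
    simp only [Derivation.commutator_apply, Derivation.smul_apply] at h
    have h2 : E (Dstar P) = (-2:K) • Dstar P + Dstar (E P) := by
      rw [← h]; abel
    rw [h2, neg_smul]
    abel
  have hdeg : ∀ Q : MvPolynomial (Σ j : Fin s, Fin (d j + 1)) K,
      (Dstar.toLinearMap Q).totalDegree ≤ Q.totalDegree := by
    intro Q
    rw [hDstar]
    refine totalDegree_deriv_le' _ (fun v => ?_) Q
    obtain ⟨j, i⟩ := v
    dsimp only
    split_ifs with hlt
    · refine (totalDegree_mul _ _).trans ?_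
      rw [← MvPolynomial.C_eq_coe_nat, totalDegree_C, totalDegree_X]
    · simp
  have hrp : r ≤ p := le_trans hr (min_le_left _ _)
  have hrq : r ≤ q := le_trans hr (min_le_right _ _)
  have heT : Dd (transv Dstar p q r F G) = 0 :=
    transv_ker Dd Dstar E hef hhf hFker hGker hEF hEG hrp hrq
  have hhT : E (transv Dstar p q r F G)
      = ((p:K) + q - 2*r) • transv Dstar p q r F G :=
    transv_eigen Dstar E hhf hEF hEG
  have hhT' : E (transv Dstar p q r F G)
      = (((p + q - 2*r : ℕ)):K) • transv Dstar p q r F G := by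
    rw [hhT]
    congr 1
    rw [Nat.cast_sub (by omega)]
    push_cast
    ring
  exact ordFn_of_eigen Dstar (e := Dd.toLinearMap) (h := E.toLinearMap)
    (fun P => hef P) (fun P => hhf P) hdeg hne heT hhT'
end

section
/- Let K be a field of characteristic 0, k a positive integer, and let D be the K-derivation of K[x₀, x₁, …, x_{2k}] with D(x₀) = 0 and D(x_i) = x_{i−1} for 1 ≤ i ≤ 2k. Then the catalecticant, i.e. the determinant of the (k+1)×(k+1) matrix M with entries M_{i,j} = (i+j)!·x_{i+j} for 0 ≤ i, j ≤ k, lies in ker D (it is a semi-invariant of degree k+1). -/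
open MvPolynomial

lemma my_deriv_prod {R A : Type*} [CommRing R] [CommRing A] [Algebra R A]
    (d : Derivation R A A) {ι : Type*} [DecidableEq ι] (s : Finset ι) (f : ι → A) :
    d (∏ i ∈ s, f i) = ∑ i ∈ s, (∏ j ∈ s.erase i, f j) * d (f i) := by
  induction s using Finset.induction_on with
  | empty => simp
  | insert a s ha ih =>
    rw [Finset.prod_insert ha, d.leibniz, smul_eq_mul, smul_eq_mul, ih,
      Finset.sum_insert ha, Finset.erase_insert ha, Finset.mul_sum]
    rw [add_comm]
    congr 1
    refine Finset.sum_congr rfl fun i hi => ?_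
    rw [Finset.erase_insert_of_ne (by rintro rfl; exact ha hi),
      Finset.prod_insert (fun h => ha (Finset.mem_of_mem_erase h)), mul_assoc]

lemma my_deriv_det {R A : Type*} [CommRing R] [CommRing A] [Algebra R A]
    (d : Derivation R A A) {n : Type*} [DecidableEq n] [Fintype n]
    (M : Matrix n n A) :
    d M.det = ∑ c, (M.updateCol c (fun i => d (M i c))).det := by
  have key : ∀ c : n, (M.updateCol c (fun i => d (M i c))).det
      = ∑ σ : Equiv.Perm n, Equiv.Perm.sign σ •
          ((∏ i ∈ Finset.univ.erase c, M (σ i) i) * d (M (σ c) c)) := by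
    intro c
    rw [Matrix.det_apply]
    refine Finset.sum_congr rfl fun σ _ => ?_
    congr 1
    rw [← Finset.mul_prod_erase Finset.univ _ (Finset.mem_univ c), mul_comm]
    congr 1
    · exact Finset.prod_congr rfl fun i hi =>
        Matrix.updateCol_ne (Finset.ne_of_mem_erase hi)
    · exact Matrix.updateCol_self
  rw [Matrix.det_apply, map_sum]
  simp_rw [key]
  rw [Finset.sum_comm]
  refine Finset.sum_congr rfl fun σ _ => ?_
  rw [Units.smul_def, map_zsmul, my_deriv_prod, Finset.smul_sum]
  rfl


/-- The `m`-th catalecticant entry `m! · x_m`. -/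
noncomputable def catE (K : Type*) [CommSemiring K] (k : ℕ) (m : ℕ) (h : m < 2 * k + 1) :
    MvPolynomial (Fin (2 * k + 1)) K :=
  (m.factorial : MvPolynomial (Fin (2 * k + 1)) K) * X ⟨m, h⟩

lemma catE_def (K : Type*) [CommSemiring K] (k : ℕ) (m : ℕ) (h : m < 2 * k + 1) :
    catE K k m h = (m.factorial : MvPolynomial (Fin (2 * k + 1)) K) * X ⟨m, h⟩ := rfl

theorem stmt_16_aux (K : Type*) [Field K] [CharZero K] (k : ℕ)
    (d : Derivation K (MvPolynomial (Fin (2 * k + 1)) K) (MvPolynomial (Fin (2 * k + 1)) K))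
    (hd : d = MvPolynomial.mkDerivation K
      (fun i : Fin (2 * k + 1) =>
        if h : (i : ℕ) = 0 then 0 else X (⟨(i : ℕ) - 1, Nat.lt_of_le_of_lt (Nat.sub_le _ _) i.isLt⟩ : Fin (2 * k + 1))))
    (M : Matrix (Fin (k + 1)) (Fin (k + 1)) (MvPolynomial (Fin (2 * k + 1)) K))
    (hM : M = Matrix.of (fun i j : Fin (k + 1) => catE K k ((i : ℕ) + (j : ℕ)) (by have := i.isLt; have := j.isLt; omega))) :
    d M.det = 0 := by
  classical
  set E : (m : ℕ) → m < 2 * k + 1 → MvPolynomial (Fin (2 * k + 1)) K := catE K k with hE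
  have hMij : ∀ (i j : Fin (k + 1)) (h : (i : ℕ) + (j : ℕ) < 2 * k + 1), M i j = E ((i : ℕ) + (j : ℕ)) h := by
    intro i j h; rw [hM]; rfl
  have hEcongr : ∀ (a b : ℕ) (ha : a < 2 * k + 1) (hb : b < 2 * k + 1),
      a = b → E a ha = E b hb := by rintro a b ha hb rfl; rfl
  have hMsymm : ∀ i j, M i j = M j i := by
    intro i j
    rw [hMij i j (by omega), hMij j i (by omega)]
    exact hEcongr _ _ _ _ (add_comm _ _)
  have hMt : M.transpose = M := Matrix.ext fun i j => hMsymm j i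
  have hadj : ∀ a b, Matrix.adjugate M a b = Matrix.adjugate M b a := by
    intro a b
    have h1 := Matrix.adjugate_transpose M
    rw [hMt] at h1
    have := congrFun (congrFun h1 b) a
    simpa [Matrix.transpose_apply] using this
  -- derivative of entries
  have hdE : ∀ (m : ℕ) (h : m < 2 * k + 1),
      d (E m h) = if hm : m = 0 then 0 else (m.factorial : MvPolynomial (Fin (2 * k + 1)) K) * X ⟨m - 1, by omega⟩ := by
    intro m h
    rw [hE, catE_def, d.leibniz, Derivation.map_natCast, smul_zero, add_zero, hd,
      MvPolynomial.mkDerivation_X]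
    by_cases hm : m = 0
    · simp [hm]
    · rw [dif_neg hm, dif_neg hm, smul_eq_mul]
  -- the two auxiliary column functions
  set g : Fin (k + 1) → Fin (k + 1) → MvPolynomial (Fin (2 * k + 1)) K := fun i c =>
    if hi : (i : ℕ) = 0 then 0 else M ⟨(i : ℕ) - 1, by omega⟩ c with hg
  set hcol : Fin (k + 1) → Fin (k + 1) → MvPolynomial (Fin (2 * k + 1)) K := fun i c =>
    if hc : (c : ℕ) = 0 then 0 else M i ⟨(c : ℕ) - 1, by omega⟩ with hh
  have key1 : ∀ (i c : Fin (k + 1)) (h0 : ¬((i : ℕ) + (c : ℕ) = 0))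
      (hlt : (i : ℕ) + (c : ℕ) - 1 < 2 * k + 1),
      (((i : ℕ) : MvPolynomial (Fin (2 * k + 1)) K)) * g i c
        = ((((i : ℕ) * ((i : ℕ) + (c : ℕ) - 1).factorial : ℕ)) :
            MvPolynomial (Fin (2 * k + 1)) K) * X ⟨(i : ℕ) + (c : ℕ) - 1, hlt⟩ := by
    intro i c h0 hlt
    by_cases hi : (i : ℕ) = 0
    · simp [hg, hi]
    · rw [hg]
      simp only [hi, dif_neg, not_false_iff]
      rw [show M ⟨(i : ℕ) - 1, by omega⟩ c = E ((i : ℕ) - 1 + (c : ℕ)) (by omega) from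
          hMij _ _ _,
        hEcongr ((i : ℕ) - 1 + (c : ℕ)) ((i : ℕ) + (c : ℕ) - 1) _ hlt (by omega), hE, catE_def,
        ← mul_assoc, ← Nat.cast_mul]
  have key2 : ∀ (i c : Fin (k + 1)) (h0 : ¬((i : ℕ) + (c : ℕ) = 0))
      (hlt : (i : ℕ) + (c : ℕ) - 1 < 2 * k + 1),
      (((c : ℕ) : MvPolynomial (Fin (2 * k + 1)) K)) * hcol i c
        = ((((c : ℕ) * ((i : ℕ) + (c : ℕ) - 1).factorial : ℕ)) :
            MvPolynomial (Fin (2 * k + 1)) K) * X ⟨(i : ℕ) + (c : ℕ) - 1, hlt⟩ := by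
    intro i c h0 hlt
    by_cases hc : (c : ℕ) = 0
    · simp [hh, hc]
    · rw [hh]
      simp only [hc, dif_neg, not_false_iff]
      rw [show M i ⟨(c : ℕ) - 1, by omega⟩ = E ((i : ℕ) + ((c : ℕ) - 1)) (by omega) from
          hMij _ _ _,
        hEcongr ((i : ℕ) + ((c : ℕ) - 1)) ((i : ℕ) + (c : ℕ) - 1) _ hlt (by omega), hE, catE_def,
        ← mul_assoc, ← Nat.cast_mul]
  have hdM : ∀ i c : Fin (k + 1),
      d (M i c) = (((i : ℕ) : MvPolynomial (Fin (2 * k + 1)) K) * g i c)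
        + (((c : ℕ) : MvPolynomial (Fin (2 * k + 1)) K) * hcol i c) := by
    intro i c
    by_cases h0 : (i : ℕ) + (c : ℕ) = 0
    · have hi : (i : ℕ) = 0 := by omega
      have hc : (c : ℕ) = 0 := by omega
      rw [hMij i c (by omega), hdE, dif_pos h0]
      simp [hg, hh, hi, hc]
    · have hlt : (i : ℕ) + (c : ℕ) - 1 < 2 * k + 1 := by omega
      rw [hMij i c (by omega), hdE, dif_neg h0, key1 i c h0 hlt, key2 i c h0 hlt,
        ← add_mul]
      refine congrArg₂ (· * ·) ?_ rfl
      rw [← Nat.cast_add]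
      refine congrArg Nat.cast ?_
      rw [← Nat.add_mul]
      exact (Nat.mul_factorial_pred (by omega)).symm
  -- split each column update according to hdM
  rw [my_deriv_det d M]
  have hsplit : ∀ c, (M.updateCol c fun i => d (M i c)).det
      = (M.updateCol c fun i => ((i : ℕ) : MvPolynomial (Fin (2 * k + 1)) K) * g i c).det := by
    intro c
    have hfun : (fun i : Fin (k + 1) => d (M i c))
        = (fun i : Fin (k + 1) => ((i : ℕ) : MvPolynomial (Fin (2 * k + 1)) K) * g i c)
          + (fun i : Fin (k + 1) => ((c : ℕ) : MvPolynomial (Fin (2 * k + 1)) K) * hcol i c) :=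
      funext fun i => hdM i c
    rw [hfun, Matrix.det_updateCol_add]
    have h2 : (M.updateCol c fun i => ((c : ℕ) : MvPolynomial (Fin (2 * k + 1)) K) * hcol i c).det = 0 := by
      by_cases hc : (c : ℕ) = 0
      · have hz : (fun i : Fin (k + 1) => ((c : ℕ) : MvPolynomial (Fin (2 * k + 1)) K) * hcol i c) = fun _ => 0 := by
          funext i; simp [hc]
        rw [hz]
        exact Matrix.det_eq_zero_of_column_eq_zero c
          (fun i => by rw [Matrix.updateCol_self])
      · have hcc : (c : ℕ) - 1 < k + 1 := by omega
        have hz : (fun i : Fin (k + 1) => ((c : ℕ) : MvPolynomial (Fin (2 * k + 1)) K) * hcol i c)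
            = ((c : ℕ) : MvPolynomial (Fin (2 * k + 1)) K) • (fun i => M i ⟨(c : ℕ) - 1, hcc⟩) := by
          funext i
          simp only [hh, hc, dif_neg, not_false_iff, Pi.smul_apply, smul_eq_mul]
        rw [hz, Matrix.det_updateCol_smul,
          Matrix.det_updateCol_eq_zero (Fin.ne_of_val_ne (by omega : (c : ℕ) - 1 ≠ (c : ℕ))),
          mul_zero]
    rw [h2, add_zero]
  simp_rw [hsplit]
  have hcram : ∀ c, (M.updateCol c fun i => ((i : ℕ) : MvPolynomial (Fin (2 * k + 1)) K) * g i c).det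
      = ∑ i, Matrix.adjugate M c i * (((i : ℕ) : MvPolynomial (Fin (2 * k + 1)) K) * g i c) := by
    intro c
    rw [← Matrix.cramer_apply, Matrix.cramer_eq_adjugate_mulVec]
    simp [Matrix.mulVec, dotProduct]
  simp_rw [hcram]
  rw [Finset.sum_comm]
  refine Finset.sum_eq_zero fun i _ => ?_
  by_cases hi : (i : ℕ) = 0
  · refine Finset.sum_eq_zero fun c _ => ?_
    simp [hg, hi]
  · have hii : (i : ℕ) - 1 < k + 1 := by omega
    have hgM : ∀ c, g i c = M ⟨(i : ℕ) - 1, hii⟩ c := by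
      intro c; simp only [hg, hi, dif_neg, not_false_iff]
    have : ∑ c, Matrix.adjugate M c i * (((i : ℕ) : MvPolynomial (Fin (2 * k + 1)) K) * g i c)
        = ((i : ℕ) : MvPolynomial (Fin (2 * k + 1)) K) * (Matrix.adjugate M * M) i ⟨(i : ℕ) - 1, hii⟩ := by
      rw [Matrix.mul_apply, Finset.mul_sum]
      refine Finset.sum_congr rfl fun c _ => ?_
      rw [hgM, hadj c i, hMsymm]
      ring
    rw [this, Matrix.adjugate_mul]
    have hne : i ≠ ⟨(i : ℕ) - 1, hii⟩ := Fin.ne_of_val_ne (by simp only [Fin.val_mk]; omega)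
    simp [Matrix.one_apply, hne]

/-- The catalecticant, the determinant of the `(k+1)×(k+1)` matrix with
`(i,j)` entry `(i+j)! · x_{i+j}`, lies in the kernel of the basic Weitzenböck derivation
`D` of `K[x₀,…,x_{2k}]`. -/
theorem stmt_16 (K : Type*) [Field K] [CharZero K] (k : ℕ) (hk : 0 < k)
    (D : Derivation K (MvPolynomial (Fin (2 * k + 1)) K) (MvPolynomial (Fin (2 * k + 1)) K))
    (hD : D = MvPolynomial.mkDerivation K
      (fun i : Fin (2 * k + 1) =>
        if h : (i : ℕ) = 0 then 0 else X (⟨(i : ℕ) - 1, by omega⟩ : Fin (2 * k + 1)))) :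
    D (Matrix.det (Matrix.of (fun i j : Fin (k + 1) =>
        (((i : ℕ) + (j : ℕ)).factorial : MvPolynomial (Fin (2 * k + 1)) K) *
          X (⟨(i : ℕ) + (j : ℕ), by omega⟩ : Fin (2 * k + 1))))) = 0 := by
  exact stmt_16_aux K k D hD _ rfl
end
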